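/- arXiv:2305.04438 — 7 statements merged into one kernel-verified Lean document; each statement's English description precedes it below -/
import Mathlib

section
/- Fix an integer k ≥ 2 and let Ψ be the Max-kAND instance on variables {1,…,k} with two clauses of weight 1 each: C^+ = ({1,…,k}, ∅) (all k literals positive) and C^− = (∅, {1,…,k}) (all k literals negative). Then val_Ψ = 1/2, every variable of Ψ has bias 0, and for every bias partition t and rounding vector p one has Obl_k^{t,p}(Ψ) = 2^{−k}. Consequently, every oblivious algorithm satisfies α(Obl_k^{t,p}) ≤ 2^{−(k−1)}. -/
open scoped BigOperators
open Classical

/-- An instance of Max-kAND on `n` Boolean variables. -/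
structure KAndInstance (k n : ℕ) where
  m : ℕ
  pos : Fin m → Finset (Fin n)
  neg : Fin m → Finset (Fin n)
  w : Fin m → ℝ
  disj : ∀ j, Disjoint (pos j) (neg j)
  arity : ∀ j, (pos j ∪ neg j).card = k
  w_nonneg : ∀ j, 0 ≤ w j
  w_total : 0 < ∑ j, w j
  cover : ∀ v : Fin n, ∃ j, 0 < w j ∧ (v ∈ pos j ∨ v ∈ neg j)

namespace KAndInstance
variable {k n : ℕ} (Ψ : KAndInstance k n)

/-- A clause is satisfied by a ±1 assignment (encoded as `Bool`, `true` = +1). -/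
def sat (x : Fin n → Bool) (j : Fin Ψ.m) : Prop :=
  (∀ v ∈ Ψ.pos j, x v = true) ∧ (∀ v ∈ Ψ.neg j, x v = false)

/-- The (fractional) value of an assignment. -/
noncomputable def val (x : Fin n → Bool) : ℝ :=
  (∑ j, if Ψ.sat x j then Ψ.w j else 0) / (∑ j, Ψ.w j)

/-- The value of the instance: the maximum value over assignments. -/
noncomputable def optVal : ℝ := ⨆ x : Fin n → Bool, Ψ.val x

/-- Total weight of clauses containing `v` positively. -/
noncomputable def wpos (v : Fin n) : ℝ := ∑ j, if v ∈ Ψ.pos j then Ψ.w j else 0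

/-- Total weight of clauses containing `v` negatively. -/
noncomputable def wneg (v : Fin n) : ℝ := ∑ j, if v ∈ Ψ.neg j then Ψ.w j else 0

/-- The bias of a variable. -/
noncomputable def bias (v : Fin n) : ℝ := (Ψ.wpos v - Ψ.wneg v) / (Ψ.wpos v + Ψ.wneg v)

end KAndInstance

/-- A symmetric partition of `[-1,1]` into `2ℓ+1` bias classes, given by
`0 ≤ t 0 < t 1 < ⋯ < t ℓ = 1` (values of `t` beyond index `ℓ` are irrelevant). -/
structure BiasPartition (ℓ : ℕ) where
  t : ℕ → ℝ
  t0_nonneg : 0 ≤ t 0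
  mono : ∀ i, i < ℓ → t i < t (i + 1)
  t_top : t ℓ = 1

namespace BiasPartition
variable {ℓ : ℕ} (T : BiasPartition ℓ)

/-- Raw index (in `{0,…,2ℓ}`, with `ℓ` = bias class `0`, `ℓ+i` = class `+i`,
`ℓ-i` = class `-i`) of the bias class containing a bias value `b`. -/
noncomputable def classIdx (b : ℝ) : ℕ :=
  if |b| ≤ T.t 0 then ℓ
  else if 0 < b then ℓ + sInf {i : ℕ | b ≤ T.t i}
  else ℓ - sInf {i : ℕ | -b ≤ T.t i}

end BiasPartition

/-- Extends a rounding vector `p = (p 1, …, p ℓ)` to a function on raw class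
indices: the probability of assigning `+1` to a variable in raw class `r`. -/
noncomputable def pExt (ℓ : ℕ) (p : ℕ → ℝ) (r : ℕ) : ℝ :=
  if r = ℓ then 1/2 else if ℓ < r then p (r - ℓ) else 1 - p (ℓ - r)

/-- The probability with which the oblivious algorithm rounds a variable of
bias `b` to `+1`. -/
noncomputable def roundProb {ℓ : ℕ} (T : BiasPartition ℓ) (p : ℕ → ℝ) (b : ℝ) : ℝ :=
  pExt ℓ p (T.classIdx b)

/-- `Obl_k^{t,p}(Ψ)`: the expected value of the random assignment produced by the
oblivious algorithm, which independently rounds each variable to `+1` with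
probability `roundProb T p (bias v)`. -/
noncomputable def oblValue {k n ℓ : ℕ} (T : BiasPartition ℓ) (p : ℕ → ℝ)
    (Ψ : KAndInstance k n) : ℝ :=
  ∑ x : Fin n → Bool,
    (∏ v, if x v then roundProb T p (Ψ.bias v) else 1 - roundProb T p (Ψ.bias v)) * Ψ.val x

/-- `α(Obl_k^{t,p})`: the approximation ratio of the oblivious algorithm, i.e. the
infimum over all instances `Ψ` of `Obl_k^{t,p}(Ψ) / val_Ψ`. -/
noncomputable def oblRatio (k ℓ : ℕ) (T : BiasPartition ℓ) (p : ℕ → ℝ) : ℝ :=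
  sInf { r : ℝ | ∃ (n : ℕ) (Ψ : KAndInstance k n), r = oblValue T p Ψ / Ψ.optVal }

/-- `γ_k`. -/
noncomputable def gammaStar (k : ℕ) : ℝ := if Odd k then 1/k else 1/(k+1)

/-- `p*_k = (1+γ_k)/2`. -/
noncomputable def pStar (k : ℕ) : ℝ := (1 + gammaStar k)/2

/-- `α*_k = 2 (p*_k (1-p*_k))^⌊k/2⌋`. -/
noncomputable def alphaStar (k : ℕ) : ℝ := 2 * (pStar k * (1 - pStar k))^(k/2)

/-- The Max-kAND instance on variables `{1,…,k}` with two unit-weight clauses: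
`C⁺` wanting all variables `+1` and `C⁻` wanting all variables `-1`. -/
def twoClauseInstance (k : ℕ) : KAndInstance k k where
  m := 2
  pos := fun j => if j = 0 then Finset.univ else ∅
  neg := fun j => if j = 0 then ∅ else Finset.univ
  w := fun _ => 1
  disj := by
    intro j
    by_cases h : j = 0 <;> simp [h]
  arity := by
    intro j
    by_cases h : j = 0 <;> simp [h]
  w_nonneg := by intro j; norm_num
  w_total := by simp
  cover := by
    intro v
    exact ⟨0, by norm_num, by simp⟩

lemma two_val (k : ℕ) (x : Fin k → Bool) :
    (twoClauseInstance k).val x =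
      ((if x = (fun _ => true) then (1:ℝ) else 0) + (if x = (fun _ => false) then (1:ℝ) else 0)) / 2 := by
  show (∑ j : Fin 2, if (twoClauseInstance k).sat x j then (1:ℝ) else 0) / (∑ _j : Fin 2, (1:ℝ)) = _
  rw [Fin.sum_univ_two, Fin.sum_univ_two]
  have h0 : (twoClauseInstance k).sat x (0 : Fin 2) ↔ x = (fun _ => true) := by
    simp [KAndInstance.sat, twoClauseInstance, funext_iff]
  have h1 : (twoClauseInstance k).sat x (1 : Fin 2) ↔ x = (fun _ => false) := by
    simp [KAndInstance.sat, twoClauseInstance, funext_iff]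
  simp only [h0, h1]
  norm_num

lemma tf_ne (k : ℕ) (hk : 2 ≤ k) : (fun _ : Fin k => true) ≠ (fun _ => false) := by
  intro h
  have := congrFun h ⟨0, by omega⟩
  simp at this

lemma two_optVal (k : ℕ) (hk : 2 ≤ k) : (twoClauseInstance k).optVal = 1/2 := by
  have hd := tf_ne k hk
  apply le_antisymm
  · apply ciSup_le
    intro x
    rw [two_val]
    by_cases h1 : x = (fun _ => true)
    · subst h1; rw [if_pos rfl, if_neg hd]; norm_num
    · by_cases h2 : x = (fun _ => false)
      · subst h2; rw [if_neg (Ne.symm hd), if_pos rfl]; norm_num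
      · rw [if_neg h1, if_neg h2]; norm_num
  · have hb : BddAbove (Set.range fun x : Fin k → Bool => (twoClauseInstance k).val x) :=
      (Set.finite_range _).bddAbove
    have := le_ciSup hb (fun _ : Fin k => true)
    rw [two_val, if_pos rfl, if_neg hd] at this
    norm_num at this
    exact this

lemma two_bias (k : ℕ) (v : Fin k) : (twoClauseInstance k).bias v = 0 := by
  have hp : (twoClauseInstance k).wpos v = 1 := by
    show (∑ j : Fin 2, if v ∈ (if j = 0 then Finset.univ else ∅) then (1:ℝ) else 0) = 1
    rw [Fin.sum_univ_two]; simp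
  have hn : (twoClauseInstance k).wneg v = 1 := by
    show (∑ j : Fin 2, if v ∈ (if j = 0 then ∅ else Finset.univ) then (1:ℝ) else 0) = 1
    rw [Fin.sum_univ_two]; simp
  simp [KAndInstance.bias, hp, hn]

lemma roundProb_zero {ℓ : ℕ} (T : BiasPartition ℓ) (p : ℕ → ℝ) :
    roundProb T p 0 = 1/2 := by
  unfold roundProb BiasPartition.classIdx
  rw [if_pos (by simpa using T.t0_nonneg)]
  simp [pExt]

lemma two_oblValue (k : ℕ) (hk : 2 ≤ k) {ℓ : ℕ} (T : BiasPartition ℓ) (p : ℕ → ℝ) :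
    oblValue T p (twoClauseInstance k) = (2 : ℝ) ^ (-(k : ℤ)) := by
  unfold oblValue
  have hprod : ∀ x : Fin k → Bool,
      (∏ v, if x v then roundProb T p ((twoClauseInstance k).bias v)
        else 1 - roundProb T p ((twoClauseInstance k).bias v)) = (1/2 : ℝ)^k := by
    intro x
    have : ∀ v : Fin k, (if x v then roundProb T p ((twoClauseInstance k).bias v)
        else 1 - roundProb T p ((twoClauseInstance k).bias v)) = (1/2 : ℝ) := by
      intro v
      rw [two_bias, roundProb_zero]
      by_cases h : x v <;> simp [h] <;> norm_num
    rw [Finset.prod_congr rfl (fun v _ => this v)]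
    simp
  simp only [hprod]
  rw [← Finset.mul_sum]
  have hsum : (∑ x : Fin k → Bool, (twoClauseInstance k).val x) = 1 := by
    have : ∀ x : Fin k → Bool, (twoClauseInstance k).val x =
        ((if x = (fun _ => true) then (1:ℝ) else 0) + (if x = (fun _ => false) then (1:ℝ) else 0)) / 2 :=
      two_val k
    rw [Finset.sum_congr rfl (fun x _ => this x)]
    rw [← Finset.sum_div, Finset.sum_add_distrib]
    rw [Finset.sum_ite_eq' Finset.univ (fun _ => true) (fun _ => (1:ℝ)),
        Finset.sum_ite_eq' Finset.univ (fun _ => false) (fun _ => (1:ℝ))]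
    simp
  rw [hsum, mul_one]
  rw [one_div, inv_pow, ← zpow_natCast (2:ℝ) k, ← zpow_neg]

/-- **Trivial upper bound for oblivious algorithms** (`Observation`): the
two-clause instance has value `1/2`, every one of its variables has bias `0`,
and every oblivious algorithm attains expected value exactly `2^{-k}` on it;
consequently every oblivious algorithm has approximation ratio at most
`2^{-(k-1)}`. -/
theorem oblivious_trivial_upper_bound (k : ℕ) (hk : 2 ≤ k) :
    (twoClauseInstance k).optVal = 1/2 ∧
    (∀ v : Fin k, (twoClauseInstance k).bias v = 0) ∧
    ∀ (ℓ : ℕ) (T : BiasPartition ℓ) (p : ℕ → ℝ),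
      (∀ i, 1 ≤ i → i ≤ ℓ → p i ∈ Set.Icc (0 : ℝ) 1) →
      oblValue T p (twoClauseInstance k) = (2 : ℝ) ^ (-(k : ℤ)) ∧
      oblRatio k ℓ T p ≤ (2 : ℝ) ^ (-((k : ℤ) - 1)) := by
  refine ⟨two_optVal k hk, two_bias k, fun ℓ T p _ => ⟨two_oblValue k hk T p, ?_⟩⟩
  have hmem : oblValue T p (twoClauseInstance k) / (twoClauseInstance k).optVal ∈
      { r : ℝ | ∃ (n : ℕ) (Ψ : KAndInstance k n), r = oblValue T p Ψ / Ψ.optVal } :=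
    ⟨k, twoClauseInstance k, rfl⟩
  have hval : oblValue T p (twoClauseInstance k) / (twoClauseInstance k).optVal
      = (2:ℝ) ^ (-((k:ℤ) - 1)) := by
    rw [two_oblValue k hk T p, two_optVal k hk]
    rw [neg_sub, sub_eq_add_neg, zpow_add₀ (by norm_num : (2:ℝ) ≠ 0), zpow_one]
    ring
  by_cases hbdd : BddBelow { r : ℝ | ∃ (n : ℕ) (Ψ : KAndInstance k n), r = oblValue T p Ψ / Ψ.optVal }
  · calc oblRatio k ℓ T p ≤ _ := csInf_le hbdd hmem
    _ = _ := hval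
  · unfold oblRatio
    rw [Real.sInf_of_not_bddBelow hbdd]
    positivity
end

section
/- Let k ≥ 2 be an integer, 0 ≤ γ, δ ≤ 1, β > 0, and set t = (δ,1) and p = (½(1+γ)). Suppose there exist reals X, Y ≥ 0 such that for all natural numbers i, j with i+j ≤ k: (1+δ)(1−(i+j)/k)·Y + (1−δ)(j/k)·X ≤ β^{−1}(1−γ)^i(1+γ)^j, and 2 − (1−δ)(1−(i+j)/k)·Y − (1+δ)(i/k)·X ≤ β^{−1}(1−γ)^i(1+γ)^j. Then the oblivious algorithm Obl_k^{t,p} has approximation ratio α(Obl_k^{t,p}) ≥ 2^{−(k−1)}·β. -/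
open scoped BigOperators
open Classical

/-! ### Auxiliary material for the proof -/

section AuxHV

open Finset

/-- A trivial instance, used to show the set defining `oblRatio` is nonempty. -/
noncomputable def exInstance (k : ℕ) : KAndInstance k k where
  m := 1
  pos := fun _ => Finset.univ
  neg := fun _ => ∅
  w := fun _ => 1
  disj := fun _ => Finset.disjoint_empty_right _
  arity := fun _ => by simp
  w_nonneg := fun _ => zero_le_one
  w_total := by simp
  cover := fun v => ⟨0, one_pos, Or.inl (Finset.mem_univ v)⟩

lemma sum_pi_bool {n : ℕ} (g : Fin n → Bool → ℝ) :
    ∑ x : Fin n → Bool, ∏ v, g v (x v) = ∏ v, (g v false + g v true) := by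
  have : ∀ v : Fin n, g v false + g v true = ∑ b : Bool, g v b := by
    intro v; simp [Fintype.sum_bool]; ring
  simp_rw [this]
  rw [Finset.prod_univ_sum, Fintype.piFinset_univ]

lemma prod_indicator_pow {n : ℕ} (s : Finset (Fin n)) (c : Fin n → ℝ) (x a : ℝ) :
    ∏ v ∈ s, a ^ (if c v = x then 1 else 0) = a ^ (s.filter (fun v => c v = x)).card := by
  rw [Finset.prod_pow_eq_pow_sum]
  congr 1
  rw [Finset.card_filter]

lemma clause_prod {n : ℕ} (P N : Finset (Fin n)) (c : Fin n → ℝ) (γ : ℝ)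
    (hc : ∀ v, c v = -1 ∨ c v = 0 ∨ c v = 1) :
    (∏ v ∈ P, (1 + c v * γ)/2) * ∏ v ∈ N, (1 - c v * γ)/2
      = (1/2)^(P.card + N.card) *
        (1-γ)^((P.filter (fun v => c v = -1)).card + (N.filter (fun v => c v = 1)).card) *
        (1+γ)^((P.filter (fun v => c v = 1)).card + (N.filter (fun v => c v = -1)).card) := by
  have hP : ∀ v ∈ P, (1 + c v * γ)/2
      = (1/2) * ((1-γ) ^ (if c v = -1 then 1 else 0) * (1+γ) ^ (if c v = 1 then 1 else 0)) := by
    intro v _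
    rcases hc v with h | h | h <;> norm_num [h] <;> ring
  have hN : ∀ v ∈ N, (1 - c v * γ)/2
      = (1/2) * ((1-γ) ^ (if c v = 1 then 1 else 0) * (1+γ) ^ (if c v = -1 then 1 else 0)) := by
    intro v _
    rcases hc v with h | h | h <;> norm_num [h] <;> ring
  rw [Finset.prod_congr rfl hP, Finset.prod_congr rfl hN]
  simp only [Finset.prod_mul_distrib, Finset.prod_const, prod_indicator_pow]
  rw [pow_add, pow_add, pow_add]; ring

lemma sum_assignments {n : ℕ} (P N : Finset (Fin n)) (hd : Disjoint P N) (q : Fin n → ℝ) :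
    ∑ x : Fin n → Bool, (∏ v, if x v then q v else 1 - q v) *
      (if ((∀ v ∈ P, x v = true) ∧ (∀ v ∈ N, x v = false)) then (1:ℝ) else 0)
    = (∏ v ∈ P, q v) * ∏ v ∈ N, (1 - q v) := by
  set g : Fin n → Bool → ℝ := fun v b =>
    (if b then q v else 1 - q v) *
      (if v ∈ P then (if b then 1 else 0) else if v ∈ N then (if b then 0 else 1) else 1)
    with hg
  have step1 : ∀ x : Fin n → Bool,
      (∏ v, if x v then q v else 1 - q v) *
        (if ((∀ v ∈ P, x v = true) ∧ (∀ v ∈ N, x v = false)) then (1:ℝ) else 0)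
      = ∏ v, g v (x v) := by
    intro x
    rw [hg]
    simp only [Finset.prod_mul_distrib]
    congr 1
    by_cases hs : (∀ v ∈ P, x v = true) ∧ (∀ v ∈ N, x v = false)
    · rw [if_pos hs, Finset.prod_eq_one]
      intro v _
      by_cases hP : v ∈ P
      · simp [hP, hs.1 v hP]
      · by_cases hN : v ∈ N
        · simp [hP, hN, hs.2 v hN]
        · simp [hP, hN]
    · rw [if_neg hs]
      push_neg at hs
      by_cases hP : ∀ v ∈ P, x v = true
      · obtain ⟨v, hv, hxv⟩ := hs hP
        refine (Finset.prod_eq_zero (Finset.mem_univ v) ?_).symm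
        have hvP : v ∉ P := fun h => (Finset.disjoint_left.mp hd h) hv
        simp [hvP, hv, hxv]
      · push_neg at hP
        obtain ⟨v, hv, hxv⟩ := hP
        refine (Finset.prod_eq_zero (Finset.mem_univ v) ?_).symm
        simp [hv, Bool.not_eq_true] at hxv ⊢
        simp [hxv]
  simp_rw [step1]
  rw [sum_pi_bool]
  have step3 : ∀ v : Fin n, g v false + g v true
      = if v ∈ P then q v else if v ∈ N then 1 - q v else 1 := by
    intro v
    rw [hg]
    by_cases hP : v ∈ P
    · simp [hP]
    · by_cases hN : v ∈ N <;> simp [hP, hN] <;> ring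
  simp_rw [step3]
  rw [← Finset.prod_subset (Finset.subset_univ (P ∪ N))
    (by intro v _ hv; simp at hv; simp [hv.1, hv.2])]
  rw [Finset.prod_union hd]
  congr 1
  · exact Finset.prod_congr rfl fun v hv => by simp [hv]
  · exact Finset.prod_congr rfl fun v hv => by
      have : v ∉ P := fun h => (Finset.disjoint_left.mp hd h) hv
      simp [hv, this]

lemma roundProb_eval (T : BiasPartition 1) (γ δ : ℝ) (hT : T.t 0 = δ) (b : ℝ)
    (hb : |b| ≤ 1) :
    roundProb T (fun _ => (1 + γ) / 2) b
      = (1 + (if |b| ≤ δ then 0 else if 0 < b then 1 else -1) * γ) / 2 := by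
  have ht1 : T.t 1 = 1 := T.t_top
  have hδ0 : 0 ≤ δ := hT ▸ T.t0_nonneg
  rw [roundProb, BiasPartition.classIdx, hT]
  by_cases h0 : |b| ≤ δ
  · simp [h0, pExt]
  · rw [if_neg h0]
    by_cases hpos : 0 < b
    · have hmem : 1 ∈ {i : ℕ | b ≤ T.t i} := by
        simp only [Set.mem_setOf_eq, ht1]; exact le_trans (le_abs_self b) hb
      have hne : sInf {i : ℕ | b ≤ T.t i} ≠ 0 := by
        intro h
        have h0' : 0 ∈ {i : ℕ | b ≤ T.t i} := h ▸ Nat.sInf_mem ⟨1, hmem⟩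
        simp only [Set.mem_setOf_eq, hT] at h0'
        exact h0 (abs_le.mpr ⟨le_trans (by linarith) hpos.le, h0'⟩)
      have hle : sInf {i : ℕ | b ≤ T.t i} ≤ 1 := Nat.sInf_le hmem
      have heq : sInf {i : ℕ | b ≤ T.t i} = 1 := by omega
      rw [if_pos hpos, heq]
      simp [pExt, hpos, h0]
    · have hmem : 1 ∈ {i : ℕ | -b ≤ T.t i} := by
        simp only [Set.mem_setOf_eq, ht1]; exact le_trans (neg_le_abs b) hb
      have hne : sInf {i : ℕ | -b ≤ T.t i} ≠ 0 := by
        intro h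
        have h0' : 0 ∈ {i : ℕ | -b ≤ T.t i} := h ▸ Nat.sInf_mem ⟨1, hmem⟩
        simp only [Set.mem_setOf_eq, hT] at h0'
        push_neg at hpos
        exact h0 (abs_le.mpr ⟨by linarith, by linarith⟩)
      have hle : sInf {i : ℕ | -b ≤ T.t i} ≤ 1 := Nat.sInf_le hmem
      have h1' : sInf {i : ℕ | -b ≤ T.t i} = 1 := by omega
      rw [if_neg hpos, h1']
      norm_num [pExt, h0, hpos]
      ring

namespace KAndInstance
variable {k n : ℕ} (Ψ : KAndInstance k n)

lemma wpos_nonneg (v : Fin n) : 0 ≤ Ψ.wpos v :=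
  Finset.sum_nonneg fun j _ => by split_ifs; exacts [Ψ.w_nonneg j, le_refl 0]

lemma wneg_nonneg (v : Fin n) : 0 ≤ Ψ.wneg v :=
  Finset.sum_nonneg fun j _ => by split_ifs; exacts [Ψ.w_nonneg j, le_refl 0]

lemma bias_abs_le_one (v : Fin n) : |Ψ.bias v| ≤ 1 := by
  have hp := Ψ.wpos_nonneg v
  have hn := Ψ.wneg_nonneg v
  rw [KAndInstance.bias]
  rcases eq_or_lt_of_le (by linarith : (0:ℝ) ≤ Ψ.wpos v + Ψ.wneg v) with h | h
  · rw [← h, div_zero]; norm_num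
  · rw [abs_div, div_le_one (by rwa [abs_of_pos h])]
    rw [abs_of_pos h]
    rcases abs_cases (Ψ.wpos v - Ψ.wneg v) with ⟨he, _⟩ | ⟨he, _⟩ <;> rw [he] <;> linarith

lemma bias_small {δ : ℝ} (hδ0 : 0 ≤ δ) (v : Fin n) (h : |Ψ.bias v| ≤ δ) :
    (1-δ) * Ψ.wpos v ≤ (1+δ) * Ψ.wneg v ∧ (1-δ) * Ψ.wneg v ≤ (1+δ) * Ψ.wpos v := by
  have hp := Ψ.wpos_nonneg v
  have hn := Ψ.wneg_nonneg v
  rw [KAndInstance.bias] at h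
  rcases eq_or_lt_of_le (by linarith : (0:ℝ) ≤ Ψ.wpos v + Ψ.wneg v) with hs | hs
  · constructor <;> nlinarith
  · rw [abs_div, abs_of_pos hs, div_le_iff₀ hs] at h
    rcases abs_cases (Ψ.wpos v - Ψ.wneg v) with ⟨he, _⟩ | ⟨he, _⟩ <;>
      rw [he] at h <;> constructor <;> nlinarith

lemma bias_posbig {δ : ℝ} (hδ0 : 0 ≤ δ) (v : Fin n) (h : ¬ |Ψ.bias v| ≤ δ)
    (hpos : 0 < Ψ.bias v) : (1+δ) * Ψ.wneg v ≤ (1-δ) * Ψ.wpos v := by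
  have hp := Ψ.wpos_nonneg v
  have hn := Ψ.wneg_nonneg v
  push_neg at h
  rw [KAndInstance.bias] at h hpos
  rcases eq_or_lt_of_le (by linarith : (0:ℝ) ≤ Ψ.wpos v + Ψ.wneg v) with hs | hs
  · rw [← hs, div_zero] at hpos; linarith
  · rw [abs_div, abs_of_pos hs, lt_div_iff₀ hs] at h
    rw [div_pos_iff] at hpos
    rcases hpos with ⟨hd, _⟩ | ⟨_, hd⟩
    · rw [abs_of_pos hd] at h; nlinarith
    · linarith
lemma bias_negbig {δ : ℝ} (hδ0 : 0 ≤ δ) (v : Fin n) (h : ¬ |Ψ.bias v| ≤ δ)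
    (hpos : ¬ 0 < Ψ.bias v) : (1+δ) * Ψ.wpos v ≤ (1-δ) * Ψ.wneg v := by
  have hp := Ψ.wpos_nonneg v
  have hn := Ψ.wneg_nonneg v
  push_neg at h hpos
  rw [KAndInstance.bias] at h hpos
  rcases eq_or_lt_of_le (by linarith : (0:ℝ) ≤ Ψ.wpos v + Ψ.wneg v) with hs | hs
  · nlinarith
  · rw [abs_div, abs_of_pos hs, lt_div_iff₀ hs] at h
    rw [div_nonpos_iff] at hpos
    rcases hpos with ⟨hnum, hden⟩ | ⟨hnum, hden⟩
    · linarith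
    · rcases abs_cases (Ψ.wpos v - Ψ.wneg v) with ⟨he, hx⟩ | ⟨he, hx⟩ <;> rw [he] at h <;> nlinarith

end KAndInstance

lemma card_filter_cast {n : ℕ} (s : Finset (Fin n)) (P : Fin n → Prop) :
    ((s.filter (fun v => P v)).card : ℝ) = ∑ v, if v ∈ s ∧ P v then (1:ℝ) else 0 := by
  have h : s.filter (fun v => P v) = Finset.univ.filter (fun v => v ∈ s ∧ P v) := by
    ext v; simp
  rw [h, Finset.card_filter]
  push_cast
  refine Finset.sum_congr rfl fun v _ => ?_
  split_ifs <;> simp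

end AuxHV


section AuxHV2

/-- The sign class of a variable: `0` if `|bias| ≤ δ`, else `±1` by sign. -/
noncomputable def cls {k n : ℕ} (Ψ : KAndInstance k n) (δ : ℝ) (v : Fin n) : ℝ :=
  if |Ψ.bias v| ≤ δ then 0 else if 0 < Ψ.bias v then 1 else -1

lemma cls_cases {k n : ℕ} (Ψ : KAndInstance k n) (δ : ℝ) (v : Fin n) :
    cls Ψ δ v = -1 ∨ cls Ψ δ v = 0 ∨ cls Ψ δ v = 1 := by
  rw [cls]; split_ifs <;> simp

lemma cls_eq_zero {k n : ℕ} {Ψ : KAndInstance k n} {δ : ℝ} {v : Fin n}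
    (h : cls Ψ δ v = 0) : |Ψ.bias v| ≤ δ := by
  rw [cls] at h; split_ifs at h with h1 h2
  · exact h1
  · norm_num at h
  · norm_num at h

lemma cls_eq_one {k n : ℕ} {Ψ : KAndInstance k n} {δ : ℝ} {v : Fin n}
    (h : cls Ψ δ v = 1) : ¬ |Ψ.bias v| ≤ δ ∧ 0 < Ψ.bias v := by
  rw [cls] at h; split_ifs at h with h1 h2
  · norm_num at h
  · exact ⟨h1, h2⟩
  · norm_num at h

lemma cls_eq_negone {k n : ℕ} {Ψ : KAndInstance k n} {δ : ℝ} {v : Fin n}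
    (h : cls Ψ δ v = -1) : ¬ |Ψ.bias v| ≤ δ ∧ ¬ 0 < Ψ.bias v := by
  rw [cls] at h; split_ifs at h with h1 h2
  · norm_num at h
  · norm_num at h
  · exact ⟨h1, h2⟩

/-- Number of "disagreeing" biased literals of clause `j`. -/
noncomputable def iCnt {k n : ℕ} (Ψ : KAndInstance k n) (δ : ℝ) (j : Fin Ψ.m) : ℕ :=
  ((Ψ.pos j).filter (fun v => cls Ψ δ v = -1)).card +
    ((Ψ.neg j).filter (fun v => cls Ψ δ v = 1)).card

/-- Number of "agreeing" biased literals of clause `j`. -/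
noncomputable def jCnt {k n : ℕ} (Ψ : KAndInstance k n) (δ : ℝ) (j : Fin Ψ.m) : ℕ :=
  ((Ψ.pos j).filter (fun v => cls Ψ δ v = 1)).card +
    ((Ψ.neg j).filter (fun v => cls Ψ δ v = -1)).card

/-- Number of unbiased variables of clause `j`. -/
noncomputable def zCnt {k n : ℕ} (Ψ : KAndInstance k n) (δ : ℝ) (j : Fin Ψ.m) : ℕ :=
  ((Ψ.pos j).filter (fun v => cls Ψ δ v = 0)).card +
    ((Ψ.neg j).filter (fun v => cls Ψ δ v = 0)).card

lemma card_filter_three {n : ℕ} (c : Fin n → ℝ)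
    (hc : ∀ v, c v = -1 ∨ c v = 0 ∨ c v = 1) (s : Finset (Fin n)) :
    (s.filter (fun v => c v = -1)).card + (s.filter (fun v => c v = 0)).card
      + (s.filter (fun v => c v = 1)).card = s.card := by
  rw [Finset.card_filter, Finset.card_filter, Finset.card_filter,
    ← Finset.sum_add_distrib, ← Finset.sum_add_distrib, Finset.card_eq_sum_ones]
  refine Finset.sum_congr rfl fun v _ => ?_
  rcases hc v with h | h | h <;> norm_num [h]

lemma cnt_sum {k n : ℕ} (Ψ : KAndInstance k n) (δ : ℝ) (j : Fin Ψ.m) :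
    iCnt Ψ δ j + jCnt Ψ δ j + zCnt Ψ δ j = k := by
  have hp := card_filter_three (cls Ψ δ) (cls_cases Ψ δ) (Ψ.pos j)
  have hn := card_filter_three (cls Ψ δ) (cls_cases Ψ δ) (Ψ.neg j)
  have harity : (Ψ.pos j).card + (Ψ.neg j).card = k := by
    rw [← Finset.card_union_of_disjoint (Ψ.disj j)]; exact Ψ.arity j
  rw [iCnt, jCnt, zCnt]
  omega

lemma iCnt_cast {k n : ℕ} (Ψ : KAndInstance k n) (δ : ℝ) (j : Fin Ψ.m) :
    ((iCnt Ψ δ j : ℝ)) = ∑ v, ((if v ∈ Ψ.pos j ∧ cls Ψ δ v = -1 then (1:ℝ) else 0)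
      + (if v ∈ Ψ.neg j ∧ cls Ψ δ v = 1 then (1:ℝ) else 0)) := by
  rw [iCnt]; push_cast
  rw [card_filter_cast, card_filter_cast, ← Finset.sum_add_distrib]

lemma jCnt_cast {k n : ℕ} (Ψ : KAndInstance k n) (δ : ℝ) (j : Fin Ψ.m) :
    ((jCnt Ψ δ j : ℝ)) = ∑ v, ((if v ∈ Ψ.pos j ∧ cls Ψ δ v = 1 then (1:ℝ) else 0)
      + (if v ∈ Ψ.neg j ∧ cls Ψ δ v = -1 then (1:ℝ) else 0)) := by
  rw [jCnt]; push_cast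
  rw [card_filter_cast, card_filter_cast, ← Finset.sum_add_distrib]

lemma zCnt_cast {k n : ℕ} (Ψ : KAndInstance k n) (δ : ℝ) (j : Fin Ψ.m) :
    ((zCnt Ψ δ j : ℝ)) = ∑ v, ((if v ∈ Ψ.pos j ∧ cls Ψ δ v = 0 then (1:ℝ) else 0)
      + (if v ∈ Ψ.neg j ∧ cls Ψ δ v = 0 then (1:ℝ) else 0)) := by
  rw [zCnt]; push_cast
  rw [card_filter_cast, card_filter_cast, ← Finset.sum_add_distrib]

end AuxHV2

section AuxHV3
variable {k n : ℕ} (Ψ : KAndInstance k n)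

lemma sat_mem_pos {a : Fin n → Bool} {j : Fin Ψ.m} (hs : Ψ.sat a j) {v : Fin n}
    (hv : v ∈ Ψ.pos j) : a v = true := hs.1 v hv

lemma sat_mem_neg {a : Fin n → Bool} {j : Fin Ψ.m} (hs : Ψ.sat a j) {v : Fin n}
    (hv : v ∈ Ψ.neg j) : a v = false := hs.2 v hv

lemma BY_nonneg (δ : ℝ) (hδ0 : 0 ≤ δ) (hδ1 : δ ≤ 1) (a : Fin n → Bool) :
    0 ≤ ∑ j, Ψ.w j * (zCnt Ψ δ j : ℝ) * (if Ψ.sat a j then -(1-δ) else (1+δ)) := by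
  have hrw : ∀ j : Fin Ψ.m, Ψ.w j * (zCnt Ψ δ j : ℝ) * (if Ψ.sat a j then -(1-δ) else (1+δ))
      = ∑ v, Ψ.w j * ((if v ∈ Ψ.pos j ∧ cls Ψ δ v = 0 then (1:ℝ) else 0)
          + (if v ∈ Ψ.neg j ∧ cls Ψ δ v = 0 then (1:ℝ) else 0))
          * (if Ψ.sat a j then -(1-δ) else (1+δ)) := by
    intro j
    rw [zCnt_cast, Finset.mul_sum, Finset.sum_mul]
  rw [Finset.sum_congr rfl fun j _ => hrw j, Finset.sum_comm]
  apply Finset.sum_nonneg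
  intro v _
  by_cases hc0 : cls Ψ δ v = 0
  case neg =>
    exact le_of_eq (Finset.sum_eq_zero fun j _ => by simp [hc0]).symm
  case pos =>
    obtain ⟨hb1, hb2⟩ := Ψ.bias_small hδ0 v (cls_eq_zero hc0)
    have hsplit : ∑ j, Ψ.w j * ((if v ∈ Ψ.pos j ∧ cls Ψ δ v = 0 then (1:ℝ) else 0)
          + (if v ∈ Ψ.neg j ∧ cls Ψ δ v = 0 then (1:ℝ) else 0))
          * (if Ψ.sat a j then -(1-δ) else (1+δ))
        = (1+δ) * (∑ j, if ¬ Ψ.sat a j ∧ (v ∈ Ψ.pos j ∨ v ∈ Ψ.neg j) then Ψ.w j else 0)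
          - (1-δ) * (∑ j, if Ψ.sat a j ∧ (v ∈ Ψ.pos j ∨ v ∈ Ψ.neg j) then Ψ.w j else 0) := by
      rw [Finset.mul_sum, Finset.mul_sum, ← Finset.sum_sub_distrib]
      refine Finset.sum_congr rfl fun j _ => ?_
      have hdisj : ¬ (v ∈ Ψ.pos j ∧ v ∈ Ψ.neg j) :=
        fun hh => Finset.disjoint_left.mp (Ψ.disj j) hh.1 hh.2
      by_cases hvp : v ∈ Ψ.pos j
      · have hvn : v ∉ Ψ.neg j := fun h => hdisj ⟨hvp, h⟩
        by_cases hs : Ψ.sat a j <;> simp [hs, hvp, hvn, hc0] <;> ring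
      · by_cases hs : Ψ.sat a j <;> by_cases hvn : v ∈ Ψ.neg j <;>
          simp [hs, hvp, hvn, hc0] <;> ring
    rw [hsplit]
    have hS : (∑ j, if Ψ.sat a j ∧ (v ∈ Ψ.pos j ∨ v ∈ Ψ.neg j) then Ψ.w j else 0)
        ≤ (if a v = true then Ψ.wpos v else Ψ.wneg v) := by
      split_ifs with ha
      · rw [KAndInstance.wpos]
        refine Finset.sum_le_sum fun j _ => ?_
        split_ifs with h1 h2
        · exact le_refl _
        · exact absurd (sat_mem_neg Ψ h1.1 (h1.2.resolve_left h2)) (by simp [ha])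
        · exact Ψ.w_nonneg j
        · exact le_refl _
      · rw [KAndInstance.wneg]
        refine Finset.sum_le_sum fun j _ => ?_
        split_ifs with h1 h2
        · exact le_refl _
        · exact absurd (sat_mem_pos Ψ h1.1 (h1.2.resolve_right h2)) ha
        · exact Ψ.w_nonneg j
        · exact le_refl _
    have hU : (if a v = true then Ψ.wneg v else Ψ.wpos v)
        ≤ (∑ j, if ¬ Ψ.sat a j ∧ (v ∈ Ψ.pos j ∨ v ∈ Ψ.neg j) then Ψ.w j else 0) := by
      split_ifs with ha
      · rw [KAndInstance.wneg]
        refine Finset.sum_le_sum fun j _ => ?_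
        split_ifs with h1 h2
        · exact le_refl _
        · exact absurd (sat_mem_neg Ψ (not_not.mp (fun hns => h2 ⟨hns, Or.inr h1⟩)) h1)
            (by simp [ha])
        · exact Ψ.w_nonneg j
        · exact le_refl _
      · rw [KAndInstance.wpos]
        refine Finset.sum_le_sum fun j _ => ?_
        split_ifs with h1 h2
        · exact le_refl _
        · exact absurd (sat_mem_pos Ψ (not_not.mp (fun hns => h2 ⟨hns, Or.inl h1⟩)) h1) ha
        · exact Ψ.w_nonneg j
        · exact le_refl _
    by_cases ha : a v = true
    · rw [if_pos ha] at hS hU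
      nlinarith
    · rw [if_neg ha] at hS hU
      nlinarith
end AuxHV3

section AuxHV4
variable {k n : ℕ} (Ψ : KAndInstance k n)

lemma BX_nonneg (δ : ℝ) (hδ0 : 0 ≤ δ) (hδ1 : δ ≤ 1) (a : Fin n → Bool) :
    0 ≤ ∑ j, Ψ.w j * (if Ψ.sat a j then -((1+δ) * (iCnt Ψ δ j : ℝ))
          else (1-δ) * (jCnt Ψ δ j : ℝ)) := by
  have hrw : ∀ j : Fin Ψ.m, Ψ.w j * (if Ψ.sat a j then -((1+δ) * (iCnt Ψ δ j : ℝ))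
        else (1-δ) * (jCnt Ψ δ j : ℝ))
      = ∑ v, Ψ.w j * ((if Ψ.sat a j then -(1+δ) else 0) *
            ((if v ∈ Ψ.pos j ∧ cls Ψ δ v = -1 then (1:ℝ) else 0)
              + (if v ∈ Ψ.neg j ∧ cls Ψ δ v = 1 then (1:ℝ) else 0))
          + (if Ψ.sat a j then 0 else (1-δ)) *
            ((if v ∈ Ψ.pos j ∧ cls Ψ δ v = 1 then (1:ℝ) else 0)
              + (if v ∈ Ψ.neg j ∧ cls Ψ δ v = -1 then (1:ℝ) else 0))) := by
    intro j
    by_cases hs : Ψ.sat a j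
    · simp only [if_pos hs]
      have h1 : Ψ.w j * -((1+δ) * (iCnt Ψ δ j : ℝ))
          = (Ψ.w j * -(1+δ)) * (iCnt Ψ δ j : ℝ) := by ring
      rw [h1, iCnt_cast, Finset.mul_sum]
      exact Finset.sum_congr rfl fun v _ => by ring
    · simp only [if_neg hs]
      have h1 : Ψ.w j * ((1-δ) * (jCnt Ψ δ j : ℝ))
          = (Ψ.w j * (1-δ)) * (jCnt Ψ δ j : ℝ) := by ring
      rw [h1, jCnt_cast, Finset.mul_sum]
      exact Finset.sum_congr rfl fun v _ => by ring
  rw [Finset.sum_congr rfl fun j _ => hrw j, Finset.sum_comm]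
  apply Finset.sum_nonneg
  intro v _
  rcases cls_cases Ψ δ v with hcv | hcv | hcv
  · -- cls = -1
    obtain ⟨hna, hnpos⟩ := cls_eq_negone hcv
    have hb := Ψ.bias_negbig hδ0 v hna hnpos
    have hsplit : (∑ j, Ψ.w j * ((if Ψ.sat a j then -(1+δ) else 0) *
            ((if v ∈ Ψ.pos j ∧ cls Ψ δ v = -1 then (1:ℝ) else 0)
              + (if v ∈ Ψ.neg j ∧ cls Ψ δ v = 1 then (1:ℝ) else 0))
          + (if Ψ.sat a j then 0 else (1-δ)) *
            ((if v ∈ Ψ.pos j ∧ cls Ψ δ v = 1 then (1:ℝ) else 0)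
              + (if v ∈ Ψ.neg j ∧ cls Ψ δ v = -1 then (1:ℝ) else 0))))
        = (1-δ) * (∑ j, if ¬ Ψ.sat a j ∧ v ∈ Ψ.neg j then Ψ.w j else 0)
          - (1+δ) * (∑ j, if Ψ.sat a j ∧ v ∈ Ψ.pos j then Ψ.w j else 0) := by
      rw [Finset.mul_sum, Finset.mul_sum, ← Finset.sum_sub_distrib]
      refine Finset.sum_congr rfl fun j _ => ?_
      by_cases hs : Ψ.sat a j <;> by_cases hvp : v ∈ Ψ.pos j <;> by_cases hvn : v ∈ Ψ.neg j <;>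
        norm_num [hs, hvp, hvn, hcv] <;> ring
    rw [hsplit]
    by_cases ha : a v = true
    · have hUN : (∑ j, if ¬ Ψ.sat a j ∧ v ∈ Ψ.neg j then Ψ.w j else 0) = Ψ.wneg v := by
        rw [KAndInstance.wneg]
        refine Finset.sum_congr rfl fun j _ => ?_
        split_ifs with h1 h2 h3
        · rfl
        · exact absurd h1.2 h2
        · exact absurd (sat_mem_neg Ψ (not_not.mp fun hns => h1 ⟨hns, h3⟩) h3) (by simp [ha])
        · rfl
      have hSP : (∑ j, if Ψ.sat a j ∧ v ∈ Ψ.pos j then Ψ.w j else 0) ≤ Ψ.wpos v := by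
        rw [KAndInstance.wpos]
        refine Finset.sum_le_sum fun j _ => ?_
        split_ifs with h1 h2
        · exact le_refl _
        · exact absurd h1.2 h2
        · exact Ψ.w_nonneg j
        · exact le_refl _
      nlinarith
    · have hSP : (∑ j, if Ψ.sat a j ∧ v ∈ Ψ.pos j then Ψ.w j else 0) = 0 :=
        Finset.sum_eq_zero fun j _ => by
          split_ifs with h1
          · exact absurd (sat_mem_pos Ψ h1.1 h1.2) ha
          · rfl
      have hUN : 0 ≤ (∑ j, if ¬ Ψ.sat a j ∧ v ∈ Ψ.neg j then Ψ.w j else 0) :=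
        Finset.sum_nonneg fun j _ => by
          split_ifs
          · exact Ψ.w_nonneg j
          · exact le_refl _
      nlinarith
  · -- cls = 0
    refine le_of_eq (Finset.sum_eq_zero fun j _ => ?_).symm
    norm_num [hcv]
  · -- cls = 1
    obtain ⟨hna, hpos⟩ := cls_eq_one hcv
    have hb := Ψ.bias_posbig hδ0 v hna hpos
    have hsplit : (∑ j, Ψ.w j * ((if Ψ.sat a j then -(1+δ) else 0) *
            ((if v ∈ Ψ.pos j ∧ cls Ψ δ v = -1 then (1:ℝ) else 0)
              + (if v ∈ Ψ.neg j ∧ cls Ψ δ v = 1 then (1:ℝ) else 0))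
          + (if Ψ.sat a j then 0 else (1-δ)) *
            ((if v ∈ Ψ.pos j ∧ cls Ψ δ v = 1 then (1:ℝ) else 0)
              + (if v ∈ Ψ.neg j ∧ cls Ψ δ v = -1 then (1:ℝ) else 0))))
        = (1-δ) * (∑ j, if ¬ Ψ.sat a j ∧ v ∈ Ψ.pos j then Ψ.w j else 0)
          - (1+δ) * (∑ j, if Ψ.sat a j ∧ v ∈ Ψ.neg j then Ψ.w j else 0) := by
      rw [Finset.mul_sum, Finset.mul_sum, ← Finset.sum_sub_distrib]
      refine Finset.sum_congr rfl fun j _ => ?_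
      by_cases hs : Ψ.sat a j <;> by_cases hvp : v ∈ Ψ.pos j <;> by_cases hvn : v ∈ Ψ.neg j <;>
        norm_num [hs, hvp, hvn, hcv] <;> ring
    rw [hsplit]
    by_cases ha : a v = true
    · have hSN : (∑ j, if Ψ.sat a j ∧ v ∈ Ψ.neg j then Ψ.w j else 0) = 0 :=
        Finset.sum_eq_zero fun j _ => by
          split_ifs with h1
          · exact absurd (sat_mem_neg Ψ h1.1 h1.2) (by simp [ha])
          · rfl
      have hUP : 0 ≤ (∑ j, if ¬ Ψ.sat a j ∧ v ∈ Ψ.pos j then Ψ.w j else 0) :=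
        Finset.sum_nonneg fun j _ => by
          split_ifs
          · exact Ψ.w_nonneg j
          · exact le_refl _
      nlinarith
    · have hUP : (∑ j, if ¬ Ψ.sat a j ∧ v ∈ Ψ.pos j then Ψ.w j else 0) = Ψ.wpos v := by
        rw [KAndInstance.wpos]
        refine Finset.sum_congr rfl fun j _ => ?_
        split_ifs with h1 h2 h3
        · rfl
        · exact absurd h1.2 h2
        · exact absurd (sat_mem_pos Ψ (not_not.mp fun hns => h1 ⟨hns, h3⟩) h3) ha
        · rfl
      have hSN : (∑ j, if Ψ.sat a j ∧ v ∈ Ψ.neg j then Ψ.w j else 0) ≤ Ψ.wneg v := by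
        rw [KAndInstance.wneg]
        refine Finset.sum_le_sum fun j _ => ?_
        split_ifs with h1 h2
        · exact le_refl _
        · exact absurd h1.2 h2
        · exact Ψ.w_nonneg j
        · exact le_refl _
      nlinarith

end AuxHV4

section AuxHV5
variable {k n : ℕ} (Ψ : KAndInstance k n)

lemma clause_satprob (T : BiasPartition 1) (γ δ : ℝ) (hT : T.t 0 = δ) (j : Fin Ψ.m) :
    ∑ x : Fin n → Bool,
      (∏ v, if x v then roundProb T (fun _ => (1 + γ) / 2) (Ψ.bias v)
        else 1 - roundProb T (fun _ => (1 + γ) / 2) (Ψ.bias v)) *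
        (if Ψ.sat x j then (1:ℝ) else 0)
      = (1/2)^k * (1-γ)^(iCnt Ψ δ j) * (1+γ)^(jCnt Ψ δ j) := by
  have hq : ∀ v, roundProb T (fun _ => (1 + γ) / 2) (Ψ.bias v) = (1 + cls Ψ δ v * γ)/2 := by
    intro v
    rw [roundProb_eval T γ δ hT _ (Ψ.bias_abs_le_one v), cls]
  have hsatiff : ∀ x : Fin n → Bool, (if Ψ.sat x j then (1:ℝ) else 0)
      = (if ((∀ v ∈ Ψ.pos j, x v = true) ∧ (∀ v ∈ Ψ.neg j, x v = false)) then (1:ℝ) else 0) := by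
    intro x
    simp [KAndInstance.sat]; congr
  simp_rw [hsatiff]
  rw [sum_assignments (Ψ.pos j) (Ψ.neg j) (Ψ.disj j)]
  have e1 : ∀ v ∈ Ψ.pos j, roundProb T (fun _ => (1 + γ) / 2) (Ψ.bias v)
      = (1 + cls Ψ δ v * γ)/2 := fun v _ => hq v
  have e2 : ∀ v ∈ Ψ.neg j, 1 - roundProb T (fun _ => (1 + γ) / 2) (Ψ.bias v)
      = (1 - cls Ψ δ v * γ)/2 := fun v _ => by rw [hq v]; ring
  rw [Finset.prod_congr rfl e1, Finset.prod_congr rfl e2,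
    clause_prod _ _ (cls Ψ δ) γ (cls_cases Ψ δ)]
  have harity : (Ψ.pos j).card + (Ψ.neg j).card = k := by
    rw [← Finset.card_union_of_disjoint (Ψ.disj j)]; exact Ψ.arity j
  rw [harity, iCnt, jCnt]

lemma oblValue_eq (T : BiasPartition 1) (γ δ : ℝ) (hT : T.t 0 = δ) :
    oblValue T (fun _ => (1 + γ) / 2) Ψ
      = (∑ j, Ψ.w j * ((1/2)^k * (1-γ)^(iCnt Ψ δ j) * (1+γ)^(jCnt Ψ δ j))) / (∑ j, Ψ.w j) := by
  rw [oblValue]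
  have hterm : ∀ x : Fin n → Bool,
      (∏ v, if x v then roundProb T (fun _ => (1 + γ) / 2) (Ψ.bias v)
        else 1 - roundProb T (fun _ => (1 + γ) / 2) (Ψ.bias v)) * Ψ.val x
      = (∑ j, (∏ v, if x v then roundProb T (fun _ => (1 + γ) / 2) (Ψ.bias v)
          else 1 - roundProb T (fun _ => (1 + γ) / 2) (Ψ.bias v)) *
          (if Ψ.sat x j then (1:ℝ) else 0) * Ψ.w j) / (∑ j, Ψ.w j) := by
    intro x
    rw [KAndInstance.val, ← mul_div_assoc]
    congr 1
    rw [Finset.mul_sum]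
    refine Finset.sum_congr rfl fun j _ => ?_
    split_ifs <;> ring
  simp_rw [hterm]
  rw [← Finset.sum_div]
  congr 1
  rw [Finset.sum_comm]
  refine Finset.sum_congr rfl fun j _ => ?_
  rw [← Finset.sum_mul, clause_satprob Ψ T γ δ hT j]
  ring

end AuxHV5

/-- **Sufficient condition for good approximations** (dual construction): let
`k ≥ 2`, `0 ≤ γ, δ ≤ 1`, `β > 0`, and consider the oblivious algorithm with
bias partition `t = (δ, 1)` and rounding vector `p = (½(1+γ))`.  If there exist
`X, Y ≥ 0` such that for all naturals `i, j` with `i + j ≤ k`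
`(1+δ)(1-(i+j)/k)Y + (1-δ)(j/k)X ≤ β⁻¹(1-γ)^i(1+γ)^j` and
`2 - (1-δ)(1-(i+j)/k)Y - (1+δ)(i/k)X ≤ β⁻¹(1-γ)^i(1+γ)^j`,
then `α(Obl_k^{t,p}) ≥ 2^{-(k-1)}·β`. -/
theorem sufficient_condition (k : ℕ) (hk : 2 ≤ k) (γ δ β : ℝ)
    (hγ : γ ∈ Set.Icc (0 : ℝ) 1) (hδ : δ ∈ Set.Icc (0 : ℝ) 1) (hβ : 0 < β)
    (X Y : ℝ) (hX : 0 ≤ X) (hY : 0 ≤ Y)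
    (h1 : ∀ i j : ℕ, i + j ≤ k →
      (1 + δ) * (1 - ((i : ℝ) + j) / k) * Y + (1 - δ) * ((j : ℝ) / k) * X ≤
        β⁻¹ * (1 - γ) ^ i * (1 + γ) ^ j)
    (h2 : ∀ i j : ℕ, i + j ≤ k →
      2 - (1 - δ) * (1 - ((i : ℝ) + j) / k) * Y - (1 + δ) * ((i : ℝ) / k) * X ≤
        β⁻¹ * (1 - γ) ^ i * (1 + γ) ^ j)
    (T : BiasPartition 1) (hT : T.t 0 = δ) :
    (2 : ℝ) ^ (-((k : ℤ) - 1)) * β ≤ oblRatio k 1 T (fun _ => (1 + γ) / 2) := by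
  
  obtain ⟨hγ0, hγ1⟩ := hγ
  obtain ⟨hδ0, hδ1⟩ := hδ
  have hk0 : 0 < k := by omega
  have hkR : (0:ℝ) < (k:ℝ) := by exact_mod_cast hk0
  refine le_csInf ⟨oblValue T (fun _ => (1 + γ) / 2) (exInstance k) / (exInstance k).optVal,
    ⟨k, exInstance k, rfl⟩⟩ ?_
  rintro r ⟨n, Ψ, rfl⟩
  obtain ⟨a, ha⟩ := Finite.exists_max Ψ.val
  have hbdd : BddAbove (Set.range Ψ.val) := (Set.finite_range _).bddAbove
  have hopt : Ψ.optVal = Ψ.val a := le_antisymm (ciSup_le ha) (le_ciSup hbdd a)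
  have hW : 0 < ∑ j, Ψ.w j := Ψ.w_total
  obtain ⟨j0, hj0⟩ : ∃ j, 0 < Ψ.w j := by
    by_contra h
    push_neg at h
    have : (∑ j, Ψ.w j) ≤ 0 := Finset.sum_nonpos fun j _ => h j
    linarith
  set x0 : Fin n → Bool := fun v => if v ∈ Ψ.pos j0 then true else false with hx0
  have hx0sat : Ψ.sat x0 j0 := by
    constructor
    · intro v hv; simp [hx0, hv]
    · intro v hv
      have hvp : v ∉ Ψ.pos j0 := fun hh => Finset.disjoint_left.mp (Ψ.disj j0) hh hv
      simp [hx0, hvp]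
  have hval0 : 0 < Ψ.val x0 := by
    rw [KAndInstance.val]
    apply div_pos _ hW
    have hle : (if Ψ.sat x0 j0 then Ψ.w j0 else 0) ≤ ∑ j, if Ψ.sat x0 j then Ψ.w j else 0 :=
      Finset.single_le_sum (f := fun j => if Ψ.sat x0 j then Ψ.w j else 0)
        (fun j _ => by by_cases h : Ψ.sat x0 j <;> simp [h, Ψ.w_nonneg j])
        (Finset.mem_univ j0)
    rw [if_pos hx0sat] at hle
    linarith
  have hvala : 0 < Ψ.val a := lt_of_lt_of_le hval0 (ha x0)
  have hoptpos : 0 < Ψ.optVal := hopt ▸ hvala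
  -- main inequality
  have hMain : 2 * β * (∑ j, if Ψ.sat a j then Ψ.w j else 0)
      ≤ ∑ j, Ψ.w j * ((1-γ)^(iCnt Ψ δ j) * (1+γ)^(jCnt Ψ δ j)) := by
    have hLB : ∀ j : Fin Ψ.m,
        β * (if Ψ.sat a j then
            2 - (1-δ) * ((zCnt Ψ δ j : ℝ)/(k:ℝ)) * Y - (1+δ) * ((iCnt Ψ δ j : ℝ)/(k:ℝ)) * X
          else (1+δ) * ((zCnt Ψ δ j : ℝ)/(k:ℝ)) * Y + (1-δ) * ((jCnt Ψ δ j : ℝ)/(k:ℝ)) * X)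
        ≤ (1-γ)^(iCnt Ψ δ j) * (1+γ)^(jCnt Ψ δ j) := by
      intro j
      have hsum := cnt_sum Ψ δ j
      have hij : iCnt Ψ δ j + jCnt Ψ δ j ≤ k := by omega
      have hcast : (iCnt Ψ δ j : ℝ) + (jCnt Ψ δ j : ℝ) + (zCnt Ψ δ j : ℝ) = (k:ℝ) := by
        exact_mod_cast congrArg (Nat.cast : ℕ → ℝ) hsum
      have hzq : 1 - ((iCnt Ψ δ j : ℝ) + (jCnt Ψ δ j : ℝ))/(k:ℝ) = (zCnt Ψ δ j : ℝ)/(k:ℝ) := by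
        field_simp
        linarith
      have heq : β * (β⁻¹ * (1-γ)^(iCnt Ψ δ j) * (1+γ)^(jCnt Ψ δ j))
          = (1-γ)^(iCnt Ψ δ j) * (1+γ)^(jCnt Ψ δ j) := by
        field_simp
      split_ifs with hs
      · have h := h2 (iCnt Ψ δ j) (jCnt Ψ δ j) hij
        rw [hzq] at h
        have h' := mul_le_mul_of_nonneg_left h hβ.le
        rw [heq] at h'
        refine le_trans (le_of_eq ?_) h'
        ring
      · have h := h1 (iCnt Ψ δ j) (jCnt Ψ δ j) hij
        rw [hzq] at h
        have h' := mul_le_mul_of_nonneg_left h hβ.le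
        rw [heq] at h'
        refine le_trans (le_of_eq ?_) h'
        ring
    have step1 : (∑ j, Ψ.w j * (β * (if Ψ.sat a j then
            2 - (1-δ) * ((zCnt Ψ δ j : ℝ)/(k:ℝ)) * Y - (1+δ) * ((iCnt Ψ δ j : ℝ)/(k:ℝ)) * X
          else (1+δ) * ((zCnt Ψ δ j : ℝ)/(k:ℝ)) * Y + (1-δ) * ((jCnt Ψ δ j : ℝ)/(k:ℝ)) * X)))
        ≤ ∑ j, Ψ.w j * ((1-γ)^(iCnt Ψ δ j) * (1+γ)^(jCnt Ψ δ j)) :=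
      Finset.sum_le_sum fun j _ => mul_le_mul_of_nonneg_left (hLB j) (Ψ.w_nonneg j)
    have step2 : (∑ j, Ψ.w j * (β * (if Ψ.sat a j then
            2 - (1-δ) * ((zCnt Ψ δ j : ℝ)/(k:ℝ)) * Y - (1+δ) * ((iCnt Ψ δ j : ℝ)/(k:ℝ)) * X
          else (1+δ) * ((zCnt Ψ δ j : ℝ)/(k:ℝ)) * Y + (1-δ) * ((jCnt Ψ δ j : ℝ)/(k:ℝ)) * X)))
        = 2 * β * (∑ j, if Ψ.sat a j then Ψ.w j else 0)
          + (β*Y/(k:ℝ)) * (∑ j, Ψ.w j * (zCnt Ψ δ j : ℝ) * (if Ψ.sat a j then -(1-δ) else (1+δ)))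
          + (β*X/(k:ℝ)) * (∑ j, Ψ.w j * (if Ψ.sat a j then -((1+δ) * (iCnt Ψ δ j : ℝ))
              else (1-δ) * (jCnt Ψ δ j : ℝ))) := by
      rw [Finset.mul_sum, Finset.mul_sum, Finset.mul_sum,
        ← Finset.sum_add_distrib, ← Finset.sum_add_distrib]
      refine Finset.sum_congr rfl fun j _ => ?_
      have hkne : (k:ℝ) ≠ 0 := hkR.ne'
      split_ifs with hs <;> field_simp <;> ring
    have hBY := BY_nonneg Ψ δ hδ0 hδ1 a
    have hBX := BX_nonneg Ψ δ hδ0 hδ1 a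
    have hYk : 0 ≤ β*Y/(k:ℝ) := by positivity
    have hXk : 0 ≤ β*X/(k:ℝ) := by positivity
    nlinarith [mul_nonneg hYk hBY, mul_nonneg hXk hBX]
  -- conclusion
  rw [oblValue_eq Ψ T γ δ hT, hopt]
  have hvalform : Ψ.val a = (∑ j, if Ψ.sat a j then Ψ.w j else 0) / (∑ j, Ψ.w j) := rfl
  have hpow : (2:ℝ) ^ (-((k:ℤ) - 1)) = (1/2:ℝ)^k * 2 := by
    rw [show -((k:ℤ)-1) = 1 - (k:ℤ) by ring,
      zpow_sub₀ (two_ne_zero : (2:ℝ) ≠ 0), zpow_one, zpow_natCast, div_pow, one_pow, one_div]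
    rw [div_eq_mul_inv, mul_comm]
  have hS1 : (∑ j, Ψ.w j * ((1/2:ℝ)^k * (1-γ)^(iCnt Ψ δ j) * (1+γ)^(jCnt Ψ δ j)))
      = (1/2:ℝ)^k * ∑ j, Ψ.w j * ((1-γ)^(iCnt Ψ δ j) * (1+γ)^(jCnt Ψ δ j)) := by
    rw [Finset.mul_sum]
    exact Finset.sum_congr rfl fun j _ => by ring
  rw [le_div_iff₀ hvala, hvalform, hS1, hpow]
  have hgoal : (1/2:ℝ)^k * 2 * β * ((∑ j, if Ψ.sat a j then Ψ.w j else 0) / (∑ j, Ψ.w j))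
      = ((1/2:ℝ)^k * 2 * β * (∑ j, if Ψ.sat a j then Ψ.w j else 0)) / (∑ j, Ψ.w j) := by
    ring
  rw [hgoal, div_le_div_iff₀ hW hW]
  have hhalf : (0:ℝ) ≤ (1/2:ℝ)^k := by positivity
  calc (1/2:ℝ)^k * 2 * β * (∑ j, if Ψ.sat a j then Ψ.w j else 0) * (∑ j, Ψ.w j)
      = ((1/2:ℝ)^k * (2 * β * (∑ j, if Ψ.sat a j then Ψ.w j else 0))) * (∑ j, Ψ.w j) := by ring
    _ ≤ ((1/2:ℝ)^k * (∑ j, Ψ.w j * ((1-γ)^(iCnt Ψ δ j) * (1+γ)^(jCnt Ψ δ j)))) * (∑ j, Ψ.w j) := by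
        apply mul_le_mul_of_nonneg_right _ hW.le
        exact mul_le_mul_of_nonneg_left hMain hhalf
    _ = (1/2:ℝ)^k * (∑ j, Ψ.w j * ((1-γ)^(iCnt Ψ δ j) * (1+γ)^(jCnt Ψ δ j))) * (∑ j, Ψ.w j) := by
        ring
end

section
/- Let k ≥ 2 be an even integer and let i, j be natural numbers with i + j ≤ k. Then 1 + (j−i)/k ≤ (1 − 1/(k+1))^{i − k/2} · (1 + 1/(k+1))^{j − k/2}, where the exponents i − k/2 and j − k/2 are integers (possibly negative). Moreover, equality holds if and only if (i,j) ∈ {(k/2, k/2), (k/2 − 1, k/2), (k/2 − 1, k/2 + 1)}. -/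
lemma aux1 (t : ℝ) (ht : 0 < t) : ∀ n : ℕ, (1+t)^(n+1) * (1 - ((n:ℝ)+1)*t) < 1 := by
  intro n
  induction n with
  | zero => norm_num; nlinarith
  | succ n ih =>
    have hn : (0:ℝ) ≤ (n:ℝ) := Nat.cast_nonneg n
    have hp : (0:ℝ) < (1+t)^(n+1) := by positivity
    have hpow : (1+t)^(n+1+1) = (1+t)^(n+1) * (1+t) := pow_succ _ _
    push_cast
    rw [hpow]
    rcases le_or_gt (1 - ((n:ℝ)+1+1)*t) 0 with h | h
    · nlinarith [mul_nonpos_of_nonneg_of_nonpos (mul_pos hp (by linarith : (0:ℝ) < 1+t)).le h]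
    · have h4 : (1+t)*(1 - ((n:ℝ)+1+1)*t) ≤ 1 - ((n:ℝ)+1)*t := by
        nlinarith [mul_nonneg hn (mul_pos ht ht).le, mul_pos ht ht]
      nlinarith [mul_le_mul_of_nonneg_left h4 hp.le]

lemma aux2 (y : ℝ) (hy : 0 < y) : ∀ n : ℕ, (1+2*y)^(n+1) * (1 - (2*(n:ℝ)+1)*y) < 1 + y := by
  intro n
  induction n with
  | zero => norm_num; nlinarith
  | succ n ih =>
    have hn : (0:ℝ) ≤ (n:ℝ) := Nat.cast_nonneg n
    have hp : (0:ℝ) < (1+2*y)^(n+1) := by positivity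
    have hpow : (1+2*y)^(n+1+1) = (1+2*y)^(n+1) * (1+2*y) := pow_succ _ _
    push_cast
    rw [hpow]
    rcases le_or_gt (1 - (2*((n:ℝ)+1)+1)*y) 0 with h | h
    · nlinarith [mul_nonpos_of_nonneg_of_nonpos (mul_pos hp (by linarith : (0:ℝ) < 1+2*y)).le h]
    · have h4 : (1+2*y)*(1 - (2*((n:ℝ)+1)+1)*y) ≤ 1 - (2*(n:ℝ)+1)*y := by
        nlinarith [mul_nonneg hn (mul_pos hy hy).le, mul_pos hy hy]
      nlinarith [mul_le_mul_of_nonneg_left h4 hp.le]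

lemma bernL1 (t : ℝ) (ht : 0 < t) (n : ℤ) :
    (1 + (n:ℝ)*t ≤ (1+t)^n) ∧ (1 + (n:ℝ)*t = (1+t)^n ↔ n = 0 ∨ n = 1) := by
  have key : n ≠ 0 → n ≠ 1 → 1 + (n:ℝ)*t < (1+t)^n := by
    intro h0 h1
    rcases le_or_gt 2 n with h2 | h2
    · obtain ⟨nn, rfl⟩ : ∃ nn : ℕ, n = (nn : ℤ) := ⟨n.toNat, by omega⟩
      rw [zpow_natCast]
      have h2' : 2 ≤ nn := by exact_mod_cast h2
      clear h0 h1 h2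
      induction nn, h2' using Nat.le_induction with
      | base => push_cast; nlinarith
      | succ m hm ih =>
        have hpow : (1+t)^(m+1) = (1+t)^m * (1+t) := pow_succ _ _
        have hm' : (0:ℝ) ≤ (m:ℝ) := Nat.cast_nonneg m
        push_cast
        rw [hpow]
        push_cast at ih
        nlinarith [mul_pos ht ht, mul_nonneg hm' (mul_pos ht ht).le]
    · have hneg : n ≤ -1 := by omega
      obtain ⟨nn, rfl⟩ : ∃ nn : ℕ, n = -((nn:ℤ)+1) := ⟨(-n-1).toNat, by omega⟩
      have h1' := aux1 t ht nn
      have hp : (0:ℝ) < (1+t)^(nn+1) := by positivity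
      have hz : ((1+t):ℝ)^(-((nn:ℤ)+1)) = ((1+t)^(nn+1))⁻¹ := by
        rw [zpow_neg, ← zpow_natCast]
        norm_num
      rw [hz]
      push_cast
      nlinarith [h1', hp, mul_inv_cancel₀ (ne_of_gt hp)]
  constructor
  · by_cases h0 : n = 0
    · subst h0; norm_num
    by_cases h1 : n = 1
    · subst h1; norm_num
    · exact (key h0 h1).le
  · constructor
    · intro heq
      by_contra hc
      push_neg at hc
      exact absurd heq (ne_of_lt (key hc.1 hc.2))
    · rintro (rfl | rfl) <;> norm_num

lemma bernL2 (y : ℝ) (hy : 0 < y) (e : ℤ) :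
    (1 + (2*(e:ℝ)+1)*y ≤ (1+2*y)^e * (1+y)) ∧
    (1 + (2*(e:ℝ)+1)*y = (1+2*y)^e * (1+y) ↔ e = 0) := by
  have h2y : (0:ℝ) < 2*y := by linarith
  have key : e ≠ 0 → 1 + (2*(e:ℝ)+1)*y < (1+2*y)^e * (1+y) := by
    intro h0
    rcases le_or_gt 1 e with h1 | h1
    · have hb := (bernL1 (2*y) h2y e).1
      have he : (1:ℝ) ≤ (e:ℝ) := by exact_mod_cast h1
      nlinarith [mul_le_mul_of_nonneg_right hb (by linarith : (0:ℝ) ≤ 1+y),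
        mul_pos hy hy]
    · obtain ⟨nn, rfl⟩ : ∃ nn : ℕ, e = -((nn:ℤ)+1) := ⟨(-e-1).toNat, by omega⟩
      have hp : (0:ℝ) < (1+2*y)^(nn+1) := by positivity
      have hz : ((1+2*y):ℝ)^(-((nn:ℤ)+1)) = ((1+2*y)^(nn+1))⁻¹ := by
        rw [zpow_neg, ← zpow_natCast]; norm_num
      rw [hz, inv_mul_eq_div, lt_div_iff₀ hp]
      push_cast
      nlinarith [aux2 y hy nn]
  constructor
  · by_cases h0 : e = 0
    · subst h0; norm_num
    · exact (key h0).le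
  · constructor
    · intro heq
      by_contra hc
      exact absurd heq (ne_of_lt (key hc))
    · rintro rfl; norm_num

lemma identA {a b : ℝ} (ha : a ≠ 0) (hb : b ≠ 0) (e : ℤ) (t : ℕ) :
    a^(-e-(t:ℤ)) * b^(e-(t:ℤ)) = (b*a⁻¹)^e * ((a*b)⁻¹)^t := by
  rw [← zpow_natCast ((a*b)⁻¹) t, inv_zpow, mul_zpow, mul_zpow, inv_zpow, mul_inv,
    ← zpow_neg, ← zpow_neg, ← zpow_neg, sub_eq_add_neg, sub_eq_add_neg,
    zpow_add₀ ha, zpow_add₀ hb]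
  ring

lemma identB {a b : ℝ} (ha : a ≠ 0) (hb : b ≠ 0) (e : ℤ) (t : ℕ) :
    a^(-e-1-(t:ℤ)) * b^(e-(t:ℤ)) = (b*a⁻¹)^e * a⁻¹ * ((a*b)⁻¹)^t := by
  rw [← zpow_natCast ((a*b)⁻¹) t, inv_zpow, mul_zpow, mul_zpow, inv_zpow, mul_inv,
    ← zpow_neg, ← zpow_neg, ← zpow_neg, sub_eq_add_neg, sub_eq_add_neg, sub_eq_add_neg,
    zpow_add₀ ha, zpow_add₀ ha, zpow_add₀ hb, ← zpow_neg_one a]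
  ring

/-- **"Two-sided Bernoulli inequality", even case.**  For even `k ≥ 2` and
naturals `i, j` with `i + j ≤ k`,
`1 + (j-i)/k ≤ (1 - 1/(k+1))^(i - k/2) · (1 + 1/(k+1))^(j - k/2)` (integer
exponents, possibly negative), with equality if and only if
`(i,j) ∈ {(k/2, k/2), (k/2 - 1, k/2), (k/2 - 1, k/2 + 1)}`. -/
theorem two_sided_bernoulli_even (k : ℕ) (hk : 2 ≤ k) (hke : Even k)
    (i j : ℕ) (hij : i + j ≤ k) :
    1 + ((j : ℝ) - (i : ℝ)) / k ≤
      (1 - 1 / ((k : ℝ) + 1)) ^ ((i : ℤ) - (k : ℤ) / 2) *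
        (1 + 1 / ((k : ℝ) + 1)) ^ ((j : ℤ) - (k : ℤ) / 2) ∧
    (1 + ((j : ℝ) - (i : ℝ)) / k =
        (1 - 1 / ((k : ℝ) + 1)) ^ ((i : ℤ) - (k : ℤ) / 2) *
          (1 + 1 / ((k : ℝ) + 1)) ^ ((j : ℤ) - (k : ℤ) / 2) ↔
      ((i = k / 2 ∧ j = k / 2) ∨ (i = k / 2 - 1 ∧ j = k / 2) ∨
        (i = k / 2 - 1 ∧ j = k / 2 + 1))) := by
  rcases hke with ⟨m, hm⟩
  have hm1 : 1 ≤ m := by omega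
  have hkZ : (k:ℤ)/2 = (m:ℤ) := by omega
  have hkR : (2:ℝ) ≤ (k:ℝ) := by exact_mod_cast hk
  have hk0 : (k:ℝ) ≠ 0 := by linarith
  have hk1 : (k:ℝ)+1 ≠ 0 := by linarith
  set x : ℝ := 1/((k:ℝ)+1) with hxdef
  set y : ℝ := 1/(k:ℝ) with hydef
  have hy0 : 0 < y := by rw [hydef]; positivity
  have hx0 : 0 < x := by rw [hxdef]; positivity
  have hx1 : x < 1 := by
    rw [hxdef, div_lt_one (by linarith)]; linarith
  have ha0 : (0:ℝ) < 1 - x := by linarith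
  have hb0 : (0:ℝ) < 1 + x := by linarith
  have ha : (1:ℝ) - x ≠ 0 := ne_of_gt ha0
  have hb : (1:ℝ) + x ≠ 0 := ne_of_gt hb0
  have h2y : 1 + 2*y = (1+x) * (1-x)⁻¹ := by
    rw [hxdef, hydef]; field_simp; all_goals ring_nf; all_goals field_simp
  have h1y : 1 + y = (1-x)⁻¹ := by
    rw [hxdef, hydef]; field_simp; all_goals ring_nf; all_goals field_simp
  have hab0 : (0:ℝ) < (1-x)*(1+x) := mul_pos ha0 hb0
  have hab1 : (1-x)*(1+x) < 1 := by nlinarith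
  have hcinv : 1 < ((1-x)*(1+x))⁻¹ := by
    rw [lt_inv_comm₀ one_pos hab0]; simpa using hab1
  have hcle : ∀ t : ℕ, 1 ≤ (((1-x)*(1+x))⁻¹)^t := fun t => one_le_pow₀ hcinv.le
  have hclt : ∀ t : ℕ, t ≠ 0 → 1 < (((1-x)*(1+x))⁻¹)^t := fun t htn => one_lt_pow₀ hcinv htn
  have h2ypos : (0:ℝ) < 2*y := by linarith
  rcases Nat.even_or_odd (k - (i+j)) with ⟨t, ht⟩ | ⟨t, ht⟩
  · -- even slack
    have hsum : i + j + (t + t) = k := by omega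
    set e : ℤ := (m:ℤ) - (i:ℤ) - (t:ℤ) with hedef
    have hiE : (i:ℤ) - (k:ℤ)/2 = -e - (t:ℤ) := by omega
    have hjE : (j:ℤ) - (k:ℤ)/2 = e - (t:ℤ) := by omega
    have hL : 1 + ((j:ℝ) - (i:ℝ))/(k:ℝ) = 1 + (e:ℝ)*(2*y) := by
      have hji : (j:ℤ) - (i:ℤ) = 2*e := by omega
      have hjiR : (j:ℝ) - (i:ℝ) = 2*(e:ℝ) := by exact_mod_cast hji
      rw [hjiR, hydef]; ring
    rw [hL, hiE, hjE, identA ha hb, ← h2y]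
    obtain ⟨hble, hbeq⟩ := bernL1 (2*y) h2ypos e
    have hP : (0:ℝ) < (1+2*y)^e := zpow_pos (by linarith) e
    have hc1 : 1 ≤ (((1-x)*(1+x))⁻¹)^t := hcle t
    constructor
    · calc 1 + (e:ℝ)*(2*y) ≤ (1+2*y)^e := hble
        _ ≤ (1+2*y)^e * (((1-x)*(1+x))⁻¹)^t := le_mul_of_one_le_right hP.le hc1
    · constructor
      · intro heq
        have ht0 : t = 0 := by
          by_contra htn
          have := hclt t htn
          nlinarith
        rw [ht0] at heq
        simp only [pow_zero, mul_one] at heq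
        have he01 : e = 0 ∨ e = 1 := hbeq.mp heq
        omega
      · intro hcases
        have hte : t = 0 ∧ (e = 0 ∨ e = 1) := by omega
        rw [hte.1]
        simp only [pow_zero, mul_one]
        exact hbeq.mpr hte.2
  · -- odd slack
    have hsum : i + j + (2*t + 1) = k := by omega
    set e : ℤ := (m:ℤ) - 1 - (i:ℤ) - (t:ℤ) with hedef
    have hiE : (i:ℤ) - (k:ℤ)/2 = -e - 1 - (t:ℤ) := by omega
    have hjE : (j:ℤ) - (k:ℤ)/2 = e - (t:ℤ) := by omega
    have hL : 1 + ((j:ℝ) - (i:ℝ))/(k:ℝ) = 1 + (2*(e:ℝ)+1)*y := by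
      have hji : (j:ℤ) - (i:ℤ) = 2*e + 1 := by omega
      have hjiR : (j:ℝ) - (i:ℝ) = 2*(e:ℝ) + 1 := by exact_mod_cast hji
      rw [hjiR, hydef]; ring
    rw [hL, hiE, hjE, identB ha hb, ← h2y, ← h1y]
    obtain ⟨hble, hbeq⟩ := bernL2 y hy0 e
    have hP : (0:ℝ) < (1+2*y)^e * (1+y) := mul_pos (zpow_pos (by linarith) e) (by linarith)
    have hc1 : 1 ≤ (((1-x)*(1+x))⁻¹)^t := hcle t
    constructor
    · calc 1 + (2*(e:ℝ)+1)*y ≤ (1+2*y)^e * (1+y) := hble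
        _ ≤ (1+2*y)^e * (1+y) * (((1-x)*(1+x))⁻¹)^t := le_mul_of_one_le_right hP.le hc1
    · constructor
      · intro heq
        have ht0 : t = 0 := by
          by_contra htn
          have := hclt t htn
          nlinarith
        rw [ht0] at heq
        simp only [pow_zero, mul_one] at heq
        have he0 : e = 0 := hbeq.mp heq
        omega
      · intro hcases
        have hte : t = 0 ∧ e = 0 := by omega
        rw [hte.1]
        simp only [pow_zero, mul_one]
        exact hbeq.mpr hte.2
end

section
/- Let k ≥ 3 be an odd integer and let i, j be natural numbers with i + j ≤ k. Then 1 + (j−i)/k ≤ (1 − 1/k)^{i − (k−1)/2} · (1 + 1/k)^{j − (k−1)/2}, where the exponents i − (k−1)/2 and j − (k−1)/2 are integers (possibly negative). Moreover, equality holds if and only if (i,j) ∈ {((k−1)/2, (k−1)/2), ((k−1)/2, (k+1)/2), ((k+1)/2, (k−1)/2)}. -/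
lemma bern_aux {x : ℝ} (hx : -1 < x) (m : ℕ) :
    1 + (m : ℝ) * (-x / (1 + x)) ≤ (1 + x) ^ (-(m : ℤ)) := by
  have h1 : (0:ℝ) < 1 + x := by linarith
  have key : 1 + (-x / (1 + x)) = (1 + x)⁻¹ := by field_simp; ring
  have hy : -2 ≤ -x / (1 + x) := by
    have := inv_pos.mpr h1
    nlinarith [key]
  have h := one_add_mul_le_pow hy m
  rw [key] at h
  rwa [zpow_neg, zpow_natCast, ← inv_pow]

lemma bern_gap {x : ℝ} (hx : -1 < x) (m : ℕ) :
    (m : ℝ) * (-x / (1 + x)) - (-(m:ℝ)) * x = m * x ^ 2 / (1 + x) := by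
  have h1 : (0:ℝ) < 1 + x := by linarith
  field_simp
  ring

lemma bern_zpow {x : ℝ} (hx : -1 < x) (n : ℤ) : 1 + n * x ≤ (1 + x) ^ n := by
  have h1 : (0:ℝ) < 1 + x := by linarith
  obtain ⟨m, rfl | rfl⟩ := Int.eq_nat_or_neg n
  · rw [zpow_natCast]
    push_cast
    exact one_add_mul_le_pow (by linarith) m
  · have h := bern_aux hx m
    have hg := bern_gap hx m
    have hpos : (0:ℝ) ≤ (m:ℝ) * x ^ 2 / (1 + x) := by positivity
    push_cast
    push_cast at h
    nlinarith

lemma bern_zpow_strict {x : ℝ} (hx : -1 < x) (hx0 : x ≠ 0) {n : ℤ}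
    (h0 : n ≠ 0) (h1 : n ≠ 1) : 1 + n * x < (1 + x) ^ n := by
  have hb : (0:ℝ) < 1 + x := by linarith
  have hx2 : (0:ℝ) < x ^ 2 := by positivity
  obtain ⟨m, rfl | rfl⟩ := Int.eq_nat_or_neg n
  · have hm2 : 2 ≤ m := by omega
    obtain ⟨l, rfl⟩ : ∃ l, m = l + 2 := ⟨m - 2, by omega⟩
    have h := one_add_mul_le_pow (show (-2:ℝ) ≤ x by linarith) (l + 1)
    have h2 := mul_le_mul_of_nonneg_right h hb.le
    rw [← pow_succ] at h2
    rw [zpow_natCast]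
    push_cast
    push_cast at h2
    nlinarith
  · have hm1 : 1 ≤ m := by omega
    have h := bern_aux hx m
    have hg := bern_gap hx m
    have hpos : (0:ℝ) < (m:ℝ) * x ^ 2 / (1 + x) := by
      apply div_pos _ hb
      have : (0:ℝ) < (m:ℝ) := by exact_mod_cast hm1
      positivity
    push_cast
    push_cast at h
    nlinarith



section
variable {x : ℝ} (hx0 : 0 < x) (hx1 : x < 1)

include hx0 hx1 in
lemma base1 (p : ℤ) :
    1 + (1 - 2 * (p:ℝ)) * x ≤ (1 - x) ^ p * (1 + x) ^ (1 - p) := by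
  have ha : (0:ℝ) < 1 - x := by linarith
  have hb : (0:ℝ) < 1 + x := by linarith
  have hq : 1 + (-2*x/(1+x)) = (1-x)/(1+x) := by field_simp; ring
  have hy : (-1:ℝ) < -2*x/(1+x) := by
    have h2 : (0:ℝ) < (1-x)/(1+x) := by positivity
    nlinarith [hq]
  have h := bern_zpow hy p
  calc 1 + (1 - 2*(p:ℝ)) * x = (1+x) * (1 + (p:ℝ) * (-2*x/(1+x))) := by
        field_simp; ring
    _ ≤ (1+x) * (1 + (-2*x/(1+x))) ^ p := by
        exact mul_le_mul_of_nonneg_left h hb.le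
    _ = (1 - x) ^ p * (1 + x) ^ (1 - p) := by
        rw [hq, div_zpow, zpow_sub₀ hb.ne', zpow_one]
        field_simp

include hx0 hx1 in
lemma base1_strict {p : ℤ} (h0 : p ≠ 0) (h1 : p ≠ 1) :
    1 + (1 - 2 * (p:ℝ)) * x < (1 - x) ^ p * (1 + x) ^ (1 - p) := by
  have ha : (0:ℝ) < 1 - x := by linarith
  have hb : (0:ℝ) < 1 + x := by linarith
  have hq : 1 + (-2*x/(1+x)) = (1-x)/(1+x) := by field_simp; ring
  have hy : (-1:ℝ) < -2*x/(1+x) := by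
    have h2 : (0:ℝ) < (1-x)/(1+x) := by positivity
    nlinarith [hq]
  have hy0 : -2*x/(1+x) ≠ 0 := by
    have : -2*x/(1+x) < 0 := by
      apply div_neg_of_neg_of_pos (by linarith) hb
    linarith
  have h := bern_zpow_strict hy hy0 h0 h1
  calc 1 + (1 - 2*(p:ℝ)) * x = (1+x) * (1 + (p:ℝ) * (-2*x/(1+x))) := by
        field_simp; ring
    _ < (1+x) * (1 + (-2*x/(1+x))) ^ p := by
        exact (mul_lt_mul_iff_right₀ hb).mpr h
    _ = (1 - x) ^ p * (1 + x) ^ (1 - p) := by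
        rw [hq, div_zpow, zpow_sub₀ hb.ne', zpow_one]
        field_simp

include hx0 hx1 in
lemma base0 (p : ℤ) :
    1 + (- 2 * (p:ℝ)) * x ≤ (1 - x) ^ p * (1 + x) ^ (-p) := by
  have ha : (0:ℝ) < 1 - x := by linarith
  have hb : (0:ℝ) < 1 + x := by linarith
  rcases le_or_gt 0 p with hp | hp
  · -- route via (1-x)/(1+x)
    have hq : 1 + (-2*x/(1+x)) = (1-x)/(1+x) := by field_simp; ring
    have hy : (-1:ℝ) < -2*x/(1+x) := by
      have h2 : (0:ℝ) < (1-x)/(1+x) := by positivity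
      nlinarith [hq]
    have h := bern_zpow hy p
    have hgap : 1 + (- 2 * (p:ℝ)) * x ≤ 1 + (p:ℝ) * (-2*x/(1+x)) := by
      have hp' : (0:ℝ) ≤ (p:ℝ) := by exact_mod_cast hp
      have hkey : (p:ℝ) * (-2*x/(1+x)) - (- 2 * (p:ℝ)) * x = 2*(p:ℝ)*x^2/(1+x) := by
        field_simp; ring
      nlinarith [div_nonneg (by positivity : (0:ℝ) ≤ 2*(p:ℝ)*x^2) hb.le]
    have hfin : (1 + (-2*x/(1+x))) ^ p = (1 - x) ^ p * (1 + x) ^ (-p) := by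
      rw [hq, div_zpow, zpow_neg]
      ring
    linarith [hgap, h, hfin ▸ h]
  · -- route via (1+x)/(1-x)
    have hq : 1 + (2*x/(1-x)) = (1+x)/(1-x) := by field_simp; ring
    have hy : (-1:ℝ) < 2*x/(1-x) := by
      have : (0:ℝ) < 2*x/(1-x) := by positivity
      linarith
    have h := bern_zpow hy (-p)
    have hgap : 1 + (- 2 * (p:ℝ)) * x ≤ 1 + ((-p : ℤ):ℝ) * (2*x/(1-x)) := by
      have hp' : (0:ℝ) < ((-p : ℤ):ℝ) := by exact_mod_cast (by omega : 0 < -p)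
      have hkey : ((-p:ℤ):ℝ) * (2*x/(1-x)) - (- 2 * (p:ℝ)) * x = 2*((-p:ℤ):ℝ)*x^2/(1-x) := by
        push_cast; field_simp; ring
      nlinarith [div_nonneg (by positivity : (0:ℝ) ≤ 2*((-p:ℤ):ℝ)*x^2) ha.le]
    have hfin : (1 + (2*x/(1-x))) ^ (-p) = (1 - x) ^ p * (1 + x) ^ (-p) := by
      have hn1 : (1-x)^p ≠ 0 := zpow_ne_zero _ ha.ne'
      have hn2 : (1+x)^p ≠ 0 := zpow_ne_zero _ hb.ne'
      rw [hq, div_zpow, zpow_neg, zpow_neg]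
      field_simp
    linarith [hgap, h, hfin ▸ h]

include hx0 hx1 in
lemma base0_strict {p : ℤ} (h0 : p ≠ 0) :
    1 + (- 2 * (p:ℝ)) * x < (1 - x) ^ p * (1 + x) ^ (-p) := by
  have ha : (0:ℝ) < 1 - x := by linarith
  have hb : (0:ℝ) < 1 + x := by linarith
  rcases lt_or_lt_iff_ne.mpr h0 with hp | hp
  · -- p < 0 : route via (1+x)/(1-x)
    have hq : 1 + (2*x/(1-x)) = (1+x)/(1-x) := by field_simp; ring
    have hy : (-1:ℝ) < 2*x/(1-x) := by
      have : (0:ℝ) < 2*x/(1-x) := by positivity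
      linarith
    have h := bern_zpow hy (-p)
    have hgap : 1 + (- 2 * (p:ℝ)) * x < 1 + ((-p : ℤ):ℝ) * (2*x/(1-x)) := by
      have hp' : (0:ℝ) < ((-p : ℤ):ℝ) := by exact_mod_cast (by omega : 0 < -p)
      have hkey : ((-p:ℤ):ℝ) * (2*x/(1-x)) - (- 2 * (p:ℝ)) * x = 2*((-p:ℤ):ℝ)*x^2/(1-x) := by
        push_cast; field_simp; ring
      nlinarith [div_pos (by positivity : (0:ℝ) < 2*((-p:ℤ):ℝ)*x^2) ha]
    have hfin : (1 + (2*x/(1-x))) ^ (-p) = (1 - x) ^ p * (1 + x) ^ (-p) := by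
      have hn1 : (1-x)^p ≠ 0 := zpow_ne_zero _ ha.ne'
      have hn2 : (1+x)^p ≠ 0 := zpow_ne_zero _ hb.ne'
      rw [hq, div_zpow, zpow_neg, zpow_neg]
      field_simp
    linarith [hgap, h, hfin ▸ h]
  · -- p > 0
    have hq : 1 + (-2*x/(1+x)) = (1-x)/(1+x) := by field_simp; ring
    have hy : (-1:ℝ) < -2*x/(1+x) := by
      have h2 : (0:ℝ) < (1-x)/(1+x) := by positivity
      nlinarith [hq]
    have h := bern_zpow hy p
    have hgap : 1 + (- 2 * (p:ℝ)) * x < 1 + (p:ℝ) * (-2*x/(1+x)) := by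
      have hp' : (0:ℝ) < (p:ℝ) := by exact_mod_cast hp
      have hkey : (p:ℝ) * (-2*x/(1+x)) - (- 2 * (p:ℝ)) * x = 2*(p:ℝ)*x^2/(1+x) := by
        field_simp; ring
      nlinarith [div_pos (by positivity : (0:ℝ) < 2*(p:ℝ)*x^2) hb]
    have hfin : (1 + (-2*x/(1+x))) ^ p = (1 - x) ^ p * (1 + x) ^ (-p) := by
      rw [hq, div_zpow, zpow_neg]
      ring
    linarith [hgap, h, hfin ▸ h]

end



lemma core {x : ℝ} (hx0 : 0 < x) (hx1 : x < 1) (p q : ℤ) (hpq : p + q ≤ 1) :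
    1 + ((q:ℝ) - (p:ℝ)) * x ≤ (1 - x) ^ p * (1 + x) ^ q ∧
    (¬((p = 0 ∧ q = 0) ∨ (p = 0 ∧ q = 1) ∨ (p = 1 ∧ q = 0)) →
      1 + ((q:ℝ) - (p:ℝ)) * x < (1 - x) ^ p * (1 + x) ^ q) := by
  have ha : (0:ℝ) < 1 - x := by linarith
  have hb : (0:ℝ) < 1 + x := by linarith
  have hD : 0 < (1 - x) ^ p * (1 + x) ^ q := by positivity
  have hab0 : (0:ℝ) ≤ (1 - x) * (1 + x) := by positivity
  have hab1 : (1 - x) * (1 + x) < 1 := by nlinarith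
  obtain ⟨t, ht⟩ : ∃ t : ℕ, p + q = 1 - (t:ℤ) := ⟨(1 - (p + q)).toNat, by omega⟩
  rcases Nat.even_or_odd t with ⟨u, hu⟩ | ⟨u, hu⟩
  · -- p + q = 1 - 2u
    have hz : (q:ℤ) = 1 - p - 2 * u := by omega
    have hq' : 1 - (p + (u:ℤ)) = q + (u:ℤ) := by omega
    have hL : 1 + (1 - 2 * ((p + (u:ℤ) : ℤ):ℝ)) * x = 1 + ((q:ℝ) - (p:ℝ)) * x := by
      push_cast [hz]; ring
    have hE : (1 - x) ^ (p + (u:ℤ)) * (1 + x) ^ (q + (u:ℤ)) =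
        ((1 - x) ^ p * (1 + x) ^ q) * ((1 - x) * (1 + x)) ^ u := by
      rw [zpow_add₀ ha.ne', zpow_add₀ hb.ne', zpow_natCast, zpow_natCast, mul_pow]; ring
    have h := base1 hx0 hx1 (p + (u:ℤ))
    rw [hq', hL, hE] at h
    have hcle : ((1 - x) * (1 + x)) ^ u ≤ 1 := pow_le_one₀ hab0 hab1.le
    have hDD : ((1 - x) ^ p * (1 + x) ^ q) * ((1 - x) * (1 + x)) ^ u ≤
        (1 - x) ^ p * (1 + x) ^ q := mul_le_of_le_one_right hD.le hcle
    refine ⟨h.trans hDD, fun hns => ?_⟩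
    rcases Nat.eq_zero_or_pos u with rfl | hu1
    · have hp0 : p ≠ 0 := fun hh => hns (Or.inr (Or.inl ⟨hh, by omega⟩))
      have hp1 : p ≠ 1 := fun hh => hns (Or.inr (Or.inr ⟨hh, by omega⟩))
      have hs := base1_strict hx0 hx1 hp0 hp1
      have hqr : (q:ℝ) = 1 - (p:ℝ) := by exact_mod_cast (show (q:ℤ) = 1 - p by omega)
      rw [show (1:ℝ) - 2*(p:ℝ) = (q:ℝ) - (p:ℝ) by rw [hqr]; ring,
        show (1:ℤ) - p = q from by omega] at hs
      exact hs
    · have hclt : ((1 - x) * (1 + x)) ^ u < 1 := pow_lt_one₀ hab0 hab1 (by omega)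
      have : ((1 - x) ^ p * (1 + x) ^ q) * ((1 - x) * (1 + x)) ^ u <
          (1 - x) ^ p * (1 + x) ^ q := mul_lt_of_lt_one_right hD hclt
      linarith
  · -- p + q = -2u
    have hz : (q:ℤ) = - p - 2 * u := by omega
    have hq' : -(p + (u:ℤ)) = q + (u:ℤ) := by omega
    have hL : 1 + (- 2 * ((p + (u:ℤ) : ℤ):ℝ)) * x = 1 + ((q:ℝ) - (p:ℝ)) * x := by
      push_cast [hz]; ring
    have hE : (1 - x) ^ (p + (u:ℤ)) * (1 + x) ^ (q + (u:ℤ)) =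
        ((1 - x) ^ p * (1 + x) ^ q) * ((1 - x) * (1 + x)) ^ u := by
      rw [zpow_add₀ ha.ne', zpow_add₀ hb.ne', zpow_natCast, zpow_natCast, mul_pow]; ring
    have h := base0 hx0 hx1 (p + (u:ℤ))
    rw [hq', hL, hE] at h
    have hcle : ((1 - x) * (1 + x)) ^ u ≤ 1 := pow_le_one₀ hab0 hab1.le
    have hDD : ((1 - x) ^ p * (1 + x) ^ q) * ((1 - x) * (1 + x)) ^ u ≤
        (1 - x) ^ p * (1 + x) ^ q := mul_le_of_le_one_right hD.le hcle
    refine ⟨h.trans hDD, fun hns => ?_⟩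
    rcases Nat.eq_zero_or_pos u with rfl | hu1
    · have hp0 : p ≠ 0 := fun hh => hns (Or.inl ⟨hh, by omega⟩)
      have hs := base0_strict hx0 hx1 hp0
      have hqr : (q:ℝ) = -(p:ℝ) := by exact_mod_cast (show (q:ℤ) = -p by omega)
      rw [show (-2:ℝ)*(p:ℝ) = (q:ℝ) - (p:ℝ) by rw [hqr]; ring,
        show -p = q from by omega] at hs
      exact hs
    · have hclt : ((1 - x) * (1 + x)) ^ u < 1 := pow_lt_one₀ hab0 hab1 (by omega)
      have : ((1 - x) ^ p * (1 + x) ^ q) * ((1 - x) * (1 + x)) ^ u <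
          (1 - x) ^ p * (1 + x) ^ q := mul_lt_of_lt_one_right hD hclt
      linarith

/-- **"Two-sided Bernoulli inequality", odd case.**  For odd `k ≥ 3` and
naturals `i, j` with `i + j ≤ k`,
`1 + (j-i)/k ≤ (1 - 1/k)^(i - (k-1)/2) · (1 + 1/k)^(j - (k-1)/2)` (integer
exponents, possibly negative), with equality if and only if
`(i,j) ∈ {((k-1)/2, (k-1)/2), ((k-1)/2, (k+1)/2), ((k+1)/2, (k-1)/2)}`. -/
theorem two_sided_bernoulli_odd (k : ℕ) (hk : 3 ≤ k) (hko : Odd k)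
    (i j : ℕ) (hij : i + j ≤ k) :
    1 + ((j : ℝ) - (i : ℝ)) / k ≤
      (1 - 1 / (k : ℝ)) ^ ((i : ℤ) - ((k : ℤ) - 1) / 2) *
        (1 + 1 / (k : ℝ)) ^ ((j : ℤ) - ((k : ℤ) - 1) / 2) ∧
    (1 + ((j : ℝ) - (i : ℝ)) / k =
        (1 - 1 / (k : ℝ)) ^ ((i : ℤ) - ((k : ℤ) - 1) / 2) *
          (1 + 1 / (k : ℝ)) ^ ((j : ℤ) - ((k : ℤ) - 1) / 2) ↔
      ((i = (k - 1) / 2 ∧ j = (k - 1) / 2) ∨ (i = (k - 1) / 2 ∧ j = (k + 1) / 2) ∨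
        (i = (k + 1) / 2 ∧ j = (k - 1) / 2))) := by
  obtain ⟨m, hm⟩ := hko
  have hkr : (0:ℝ) < (k:ℝ) := by
    have : (3:ℝ) ≤ (k:ℝ) := by exact_mod_cast hk
    linarith
  have hx0 : (0:ℝ) < 1 / k := by positivity
  have hx1 : (1:ℝ) / k < 1 := by
    rw [div_lt_one hkr]
    have : (3:ℝ) ≤ (k:ℝ) := by exact_mod_cast hk
    linarith
  have he : ((k:ℤ) - 1) / 2 = (m:ℤ) := by omega
  rw [he]
  set p : ℤ := (i:ℤ) - (m:ℤ) with hp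
  set q : ℤ := (j:ℤ) - (m:ℤ) with hq
  have hpq : p + q ≤ 1 := by omega
  have hcast : ((j:ℝ) - (i:ℝ)) / k = ((q:ℝ) - (p:ℝ)) * (1 / k) := by
    rw [hp, hq]; push_cast; ring
  rw [hcast]
  obtain ⟨hle, hlt⟩ := core hx0 hx1 p q hpq
  have hset : ((p = 0 ∧ q = 0) ∨ (p = 0 ∧ q = 1) ∨ (p = 1 ∧ q = 0)) ↔
      ((i = (k - 1) / 2 ∧ j = (k - 1) / 2) ∨ (i = (k - 1) / 2 ∧ j = (k + 1) / 2) ∨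
        (i = (k + 1) / 2 ∧ j = (k - 1) / 2)) := by
    rw [hp, hq]; omega
  refine ⟨hle, ?_, ?_⟩
  · intro heq
    rw [← hset]
    by_contra hns
    exact absurd heq (ne_of_lt (hlt hns))
  · intro hs
    rw [← hset] at hs
    rcases hs with ⟨h1, h2⟩ | ⟨h1, h2⟩ | ⟨h1, h2⟩ <;> rw [h1, h2] <;>
      simp <;> ring
end

section
/- Fix an even integer k ≥ 2. There exists ε_0 > 0 such that for all 0 < ε < ε_0 the following holds. Let β = (1 − 1/(k+1))^{k/2}(1 + 1/(k+1))^{k/2}, let η = 1 − β^{−1}(1 − 1/(k+1) − ε)^{k/2}(1 + 1/(k+1) + ε)^{k/2}, and let δ = ε if k = 2 and δ = 4η otherwise. Then there exist reals X, Y ≥ 0 satisfying all six strict inequalities: (1) ½(1−δ)X < 1−η; (2) 2 − ½(1+δ)X < 1−η; (3) (½ + 1/k)(1−δ)X < (1−η)(1 + 1/(k+1) + ε)(1 − 1/(k+1) − ε)^{−1}; (4) 2 − (½ − 1/k)(1+δ)X < (1−η)(1 + 1/(k+1) + ε)(1 − 1/(k+1) − ε)^{−1}; (5) (1/k)(1+δ)Y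 + ½(1−δ)X < (1−η)(1 − 1/(k+1) − ε)^{−1}; (6) 2 − (1/k)(1−δ)Y − (½ − 1/k)(1+δ)X < (1−η)(1 − 1/(k+1) − ε)^{−1}. -/
lemma eta_bounds (a b ε : ℝ) (m : ℕ) (hm : m ≠ 0) (hε : 0 < ε)
    (hpε : 0 < a - ε) (hab : a < b) (ha : 0 < a) :
    0 < 1 - ((a^m * b^m))⁻¹ * (a-ε)^m * (b+ε)^m ∧
      1 - ((a^m * b^m))⁻¹ * (a-ε)^m * (b+ε)^m < 1 := by
  have hb : 0 < b := lt_trans ha hab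
  have key : ((a^m * b^m))⁻¹ * (a-ε)^m * (b+ε)^m = ((a-ε)*(b+ε)/(a*b))^m := by
    rw [div_pow, mul_pow, mul_pow]; ring
  have hr0 : 0 < (a-ε)*(b+ε)/(a*b) := by positivity
  have hr1 : (a-ε)*(b+ε)/(a*b) < 1 := by
    rw [div_lt_one (by positivity)]
    nlinarith
  constructor
  · rw [key]; have := pow_lt_one₀ hr0.le hr1 hm; linarith
  · rw [key]; have := pow_pos hr0 m; linarith

lemma six_general (kR ε η δ : ℝ) (hk : 6 ≤ kR) (hε : 0 < ε) (hεs : ε ≤ 1/10)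
    (hη0 : 0 < η) (hη1 : η < 1) (hδ : δ = 4*η) :
    ∃ X Y : ℝ, 0 ≤ X ∧ 0 ≤ Y ∧
      (1 / 2) * (1 - δ) * X < 1 - η ∧
      2 - (1 / 2) * (1 + δ) * X < 1 - η ∧
      (1 / 2 + 1 / kR) * (1 - δ) * X <
        (1 - η) * (1 + 1 / (kR + 1) + ε) * (1 - 1 / (kR + 1) - ε)⁻¹ ∧
      2 - (1 / 2 - 1 / kR) * (1 + δ) * X <
        (1 - η) * (1 + 1 / (kR + 1) + ε) * (1 - 1 / (kR + 1) - ε)⁻¹ ∧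
      (1 / kR) * (1 + δ) * Y + (1 / 2) * (1 - δ) * X <
        (1 - η) * (1 - 1 / (kR + 1) - ε)⁻¹ ∧
      2 - (1 / kR) * (1 - δ) * Y - (1 / 2 - 1 / kR) * (1 + δ) * X <
        (1 - η) * (1 - 1 / (kR + 1) - ε)⁻¹ := by
  subst hδ
  have hk0 : (0:ℝ) < kR := by linarith
  have hk10 : (0:ℝ) < kR + 1 := by linarith
  set u : ℝ := 1 / (kR + 1) with hu
  set v : ℝ := 1 / kR with hv
  have hu0 : 0 < u := by positivity
  have hu7 : u ≤ 1/7 := by rw [hu]; rw [div_le_div_iff₀ hk10 (by norm_num)]; linarith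
  have hv0 : 0 < v := by positivity
  have hv6 : v ≤ 1/6 := by rw [hv]; rw [div_le_div_iff₀ hk0 (by norm_num)]; linarith
  have h1 : (1 + v) * (1 - u) = 1 := by
    rw [hu, hv]; field_simp; ring
  have hp : 0 < 1 - u - ε := by linarith
  have h1η : 0 < 1 - η := by linarith
  have hb1 : (1 + 2*v) * (1 - u - ε) < 1 + u + ε := by nlinarith [mul_pos hv0 hε]
  have ha1 : (1 + v) * (1 - u - ε) < 1 := by nlinarith [mul_pos hv0 hε]
  refine ⟨2, 1, by norm_num, by norm_num, by nlinarith, by nlinarith, ?_, ?_, ?_, ?_⟩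
  · rw [← div_eq_mul_inv, lt_div_iff₀ hp]
    nlinarith [mul_pos h1η (sub_pos.mpr hb1), mul_pos (mul_pos hη0 hp) hv0,
      mul_pos hη0 hp]
  · rw [← div_eq_mul_inv, lt_div_iff₀ hp]
    nlinarith [mul_pos h1η (sub_pos.mpr hb1), mul_pos (mul_pos hη0 hp) hv0,
      mul_pos hη0 hp]
  · rw [← div_eq_mul_inv, lt_div_iff₀ hp]
    nlinarith [mul_pos h1η (sub_pos.mpr ha1), mul_pos (mul_pos hη0 hp) hv0,
      mul_pos hη0 hp]
  · rw [← div_eq_mul_inv, lt_div_iff₀ hp]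
    nlinarith [mul_pos h1η (sub_pos.mpr ha1), mul_pos (mul_pos hη0 hp) hv0,
      mul_pos hη0 hp]

lemma six_k2 (ε η δ : ℝ) (hε : 0 < ε) (hεs : ε < 1/10)
    (hη : η = 1 - ((1 - 1/(2+1:ℝ)) ^ 1 * (1 + 1/(2+1:ℝ)) ^ 1)⁻¹ *
        (1 - 1/(2+1:ℝ) - ε) ^ 1 * (1 + 1/(2+1:ℝ) + ε) ^ 1)
    (hδ : δ = ε) :
    ∃ X Y : ℝ, 0 ≤ X ∧ 0 ≤ Y ∧
      (1 / 2) * (1 - δ) * X < 1 - η ∧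
      2 - (1 / 2) * (1 + δ) * X < 1 - η ∧
      (1 / 2 + 1 / (2:ℝ)) * (1 - δ) * X <
        (1 - η) * (1 + 1 / ((2:ℝ) + 1) + ε) * (1 - 1 / ((2:ℝ) + 1) - ε)⁻¹ ∧
      2 - (1 / 2 - 1 / (2:ℝ)) * (1 + δ) * X <
        (1 - η) * (1 + 1 / ((2:ℝ) + 1) + ε) * (1 - 1 / ((2:ℝ) + 1) - ε)⁻¹ ∧
      (1 / (2:ℝ)) * (1 + δ) * Y + (1 / 2) * (1 - δ) * X <
        (1 - η) * (1 - 1 / ((2:ℝ) + 1) - ε)⁻¹ ∧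
      2 - (1 / (2:ℝ)) * (1 - δ) * Y - (1 / 2 - 1 / (2:ℝ)) * (1 + δ) * X <
        (1 - η) * (1 - 1 / ((2:ℝ) + 1) - ε)⁻¹ := by
  have hη' : η = 3/4*ε + 9/8*ε^2 := by rw [hη]; norm_num; ring
  rw [hδ, hη']
  have hp : (0:ℝ) < 1 - 1/(2+1:ℝ) - ε := by norm_num; linarith
  refine ⟨2, 1, by norm_num, by norm_num, by nlinarith, by nlinarith, ?_, ?_, ?_, ?_⟩ <;>
    rw [← div_eq_mul_inv, lt_div_iff₀ hp] <;> nlinarith [sq_nonneg ε, hε.le, mul_pos hε hε]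

lemma six_k4 (ε η δ : ℝ) (hε : 0 < ε) (hεs : ε < 1/10)
    (hη : η = 1 - ((1 - 1/(4+1:ℝ)) ^ 2 * (1 + 1/(4+1:ℝ)) ^ 2)⁻¹ *
        (1 - 1/(4+1:ℝ) - ε) ^ 2 * (1 + 1/(4+1:ℝ) + ε) ^ 2)
    (hδ : δ = 4 * η) :
    ∃ X Y : ℝ, 0 ≤ X ∧ 0 ≤ Y ∧
      (1 / 2) * (1 - δ) * X < 1 - η ∧
      2 - (1 / 2) * (1 + δ) * X < 1 - η ∧
      (1 / 2 + 1 / (4:ℝ)) * (1 - δ) * X <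
        (1 - η) * (1 + 1 / ((4:ℝ) + 1) + ε) * (1 - 1 / ((4:ℝ) + 1) - ε)⁻¹ ∧
      2 - (1 / 2 - 1 / (4:ℝ)) * (1 + δ) * X <
        (1 - η) * (1 + 1 / ((4:ℝ) + 1) + ε) * (1 - 1 / ((4:ℝ) + 1) - ε)⁻¹ ∧
      (1 / (4:ℝ)) * (1 + δ) * Y + (1 / 2) * (1 - δ) * X <
        (1 - η) * (1 - 1 / ((4:ℝ) + 1) - ε)⁻¹ ∧
      2 - (1 / (4:ℝ)) * (1 - δ) * Y - (1 / 2 - 1 / (4:ℝ)) * (1 + δ) * X <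
        (1 - η) * (1 - 1 / ((4:ℝ) + 1) - ε)⁻¹ := by
  have hη' : η = 5/6*ε + 275/144*ε^2 - 125/144*ε^3 - 625/576*ε^4 := by
    rw [hη]; norm_num; ring
  have hp : (0:ℝ) < 1 - 1/(4+1:ℝ) - ε := by norm_num; linarith
  rw [hδ, hη']
  refine ⟨2, 1, by norm_num, by norm_num, by nlinarith [sq_nonneg ε, pow_pos hε 3, pow_pos hε 4],
    by nlinarith [sq_nonneg ε, pow_pos hε 3, pow_pos hε 4], ?_, ?_, ?_, ?_⟩ <;>
    rw [← div_eq_mul_inv, lt_div_iff₀ hp] <;>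
    nlinarith [sq_nonneg ε, pow_pos hε 3, pow_pos hε 4, pow_pos hε 5, mul_pos hε hε]

/-- **Strict satisfaction of the core inequalities, even case.**  Fix an even
`k ≥ 2`.  There is `ε₀ > 0` such that for all `0 < ε < ε₀`, with
`β = (1-1/(k+1))^{k/2}(1+1/(k+1))^{k/2}`,
`η = 1 - β⁻¹(1-1/(k+1)-ε)^{k/2}(1+1/(k+1)+ε)^{k/2}`, and `δ = ε` if `k = 2`
and `δ = 4η` otherwise, there exist `X, Y ≥ 0` satisfying the six strict
inequalities of Lemma (core, even). -/
theorem core_strict_even (k : ℕ) (hk : 2 ≤ k) (hke : Even k) :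
    ∃ ε₀ : ℝ, 0 < ε₀ ∧
      ∀ ε : ℝ, 0 < ε → ε < ε₀ →
        ∀ β η δ : ℝ,
          β = (1 - 1 / ((k : ℝ) + 1)) ^ (k / 2) * (1 + 1 / ((k : ℝ) + 1)) ^ (k / 2) →
          η = 1 - β⁻¹ * (1 - 1 / ((k : ℝ) + 1) - ε) ^ (k / 2) *
                (1 + 1 / ((k : ℝ) + 1) + ε) ^ (k / 2) →
          δ = (if k = 2 then ε else 4 * η) →
          ∃ X Y : ℝ, 0 ≤ X ∧ 0 ≤ Y ∧
            (1 / 2) * (1 - δ) * X < 1 - η ∧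
            2 - (1 / 2) * (1 + δ) * X < 1 - η ∧
            (1 / 2 + 1 / (k : ℝ)) * (1 - δ) * X <
              (1 - η) * (1 + 1 / ((k : ℝ) + 1) + ε) * (1 - 1 / ((k : ℝ) + 1) - ε)⁻¹ ∧
            2 - (1 / 2 - 1 / (k : ℝ)) * (1 + δ) * X <
              (1 - η) * (1 + 1 / ((k : ℝ) + 1) + ε) * (1 - 1 / ((k : ℝ) + 1) - ε)⁻¹ ∧
            (1 / (k : ℝ)) * (1 + δ) * Y + (1 / 2) * (1 - δ) * X <
              (1 - η) * (1 - 1 / ((k : ℝ) + 1) - ε)⁻¹ ∧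
            2 - (1 / (k : ℝ)) * (1 - δ) * Y - (1 / 2 - 1 / (k : ℝ)) * (1 + δ) * X <
              (1 - η) * (1 - 1 / ((k : ℝ) + 1) - ε)⁻¹ := by
  refine ⟨1/10, by norm_num, ?_⟩
  intro ε hε hε0 β η δ hβ hη hδ
  subst hβ
  by_cases h2 : k = 2
  · subst h2
    rw [if_pos rfl] at hδ
    simp only [Nat.cast_ofNat, show (2:ℕ)/2 = 1 from rfl] at hη ⊢
    exact six_k2 ε η δ hε hε0 hη hδ
  · by_cases h4 : k = 4
    · subst h4
      rw [if_neg (by norm_num)] at hδ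
      simp only [Nat.cast_ofNat, show (4:ℕ)/2 = 2 from rfl] at hη ⊢
      exact six_k4 ε η δ hε hε0 hη hδ
    · have hk6 : 6 ≤ k := by
        obtain ⟨m, hm⟩ := hke; omega
      have hkR : (6:ℝ) ≤ (k:ℝ) := by exact_mod_cast hk6
      rw [if_neg h2] at hδ
      have hu0 : (0:ℝ) < 1/((k:ℝ)+1) := by positivity
      have hu : (1:ℝ)/((k:ℝ)+1) ≤ 1/7 := by
        rw [div_le_div_iff₀ (by linarith) (by norm_num)]; linarith
      have hpa : (0:ℝ) < (1 - 1/((k:ℝ)+1)) - ε := by linarith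
      obtain ⟨hη0, hη1⟩ := eta_bounds (1 - 1/((k:ℝ)+1)) (1 + 1/((k:ℝ)+1)) ε (k/2)
        (by omega) hε hpa (by linarith) (by linarith)
      have hη0' : 0 < η := by rw [hη]; exact hη0
      have hη1' : η < 1 := by rw [hη]; exact hη1
      exact six_general (k:ℝ) ε η δ hkR hε (by linarith) hη0' hη1' hδ
end

section
/- Fix an odd integer k ≥ 3. There exists ε_0 > 0 such that for all 0 < ε < ε_0 the following holds. Let β = (1 − 1/k)^{(k−1)/2}(1 + 1/k)^{(k−1)/2}, let η = 1 − β^{−1}(1 − 1/k − ε)^{(k−1)/2}(1 + 1/k + ε)^{(k−1)/2}, and let δ = 5η. Then there exist reals X, Y ≥ 0 satisfying all six strict inequalities: (1) (½ + 1/(2k))(1−δ)X < (1−η)(1 + 1/k + ε); (2) 2 − (½ − 1/(2k))(1+δ)X < (1−η)(1 + 1/k + ε); (3) (½ − 1/(2k))(1−δ)X < (1−η)(1 − 1/k − ε); (4) 2 − (½ + 1/(2k))(1+δ)X < (1−η)(1 − 1/k − ε); (5) (1/k)(1+δ)Y + (½ − 1/(2k))(1−δ)X < 1−η; (6) 2 −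 (1/k)(1−δ)Y − (½ − 1/(2k))(1+δ)X < 1−η. -/
set_option maxHeartbeats 1000000


/-- **Strict satisfaction of the core inequalities, odd case.**  Fix an odd
`k ≥ 3`.  There is `ε₀ > 0` such that for all `0 < ε < ε₀`, with
`β = (1-1/k)^{(k-1)/2}(1+1/k)^{(k-1)/2}`,
`η = 1 - β⁻¹(1-1/k-ε)^{(k-1)/2}(1+1/k+ε)^{(k-1)/2}`, and `δ = 5η`, there exist
`X, Y ≥ 0` satisfying the six strict inequalities of Lemma (core, odd). -/
theorem core_strict_odd (k : ℕ) (hk : 3 ≤ k) (hko : Odd k) :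
    ∃ ε₀ : ℝ, 0 < ε₀ ∧
      ∀ ε : ℝ, 0 < ε → ε < ε₀ →
        ∀ β η δ : ℝ,
          β = (1 - 1 / (k : ℝ)) ^ ((k - 1) / 2) * (1 + 1 / (k : ℝ)) ^ ((k - 1) / 2) →
          η = 1 - β⁻¹ * (1 - 1 / (k : ℝ) - ε) ^ ((k - 1) / 2) *
                (1 + 1 / (k : ℝ) + ε) ^ ((k - 1) / 2) →
          δ = 5 * η →
          ∃ X Y : ℝ, 0 ≤ X ∧ 0 ≤ Y ∧
            (1 / 2 + 1 / (2 * (k : ℝ))) * (1 - δ) * X < (1 - η) * (1 + 1 / (k : ℝ) + ε) ∧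
            2 - (1 / 2 - 1 / (2 * (k : ℝ))) * (1 + δ) * X < (1 - η) * (1 + 1 / (k : ℝ) + ε) ∧
            (1 / 2 - 1 / (2 * (k : ℝ))) * (1 - δ) * X < (1 - η) * (1 - 1 / (k : ℝ) - ε) ∧
            2 - (1 / 2 + 1 / (2 * (k : ℝ))) * (1 + δ) * X < (1 - η) * (1 - 1 / (k : ℝ) - ε) ∧
            (1 / (k : ℝ)) * (1 + δ) * Y + (1 / 2 - 1 / (2 * (k : ℝ))) * (1 - δ) * X < 1 - η ∧
            2 - (1 / (k : ℝ)) * (1 - δ) * Y - (1 / 2 - 1 / (2 * (k : ℝ))) * (1 + δ) * X < 1 - η := by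
  refine ⟨1/2, by norm_num, ?_⟩
  intro ε hε0 hε2 β η δ hβ hη hδ
  have hk3 : (3:ℝ) ≤ (k:ℝ) := by exact_mod_cast hk
  have hk0 : (0:ℝ) < (k:ℝ) := by linarith
  set m : ℕ := (k-1)/2 with hm
  set u : ℝ := 1 / (k:ℝ) with hu
  have hu0 : 0 < u := by positivity
  have hu3 : u ≤ 1/3 := by
    rw [hu, div_le_div_iff₀ hk0 (by norm_num)]; linarith
  -- relation m ↔ k
  obtain ⟨j, hj⟩ := hko
  have hm2 : 2*m + 1 = k := by omega
  have hkm : (k:ℝ) = 2*(m:ℝ) + 1 := by exact_mod_cast hm2.symm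
  have hmu : (m:ℝ)*(2*u) = 1 - u := by
    rw [hu]; field_simp; linarith
  -- positivity of d = (1-u)(1+u)
  have hd0 : (0:ℝ) < (1-u)*(1+u) := by nlinarith
  have hβval : β = ((1-u)*(1+u))^m := by rw [hβ, ← mul_pow]
  set s : ℝ := ε*(2*u+ε) / ((1-u)*(1+u)) with hs
  have hsd : s * ((1-u)*(1+u)) = ε*(2*u+ε) := div_mul_cancel₀ _ hd0.ne'
  have hs0 : 0 < s := by
    apply div_pos (by nlinarith) hd0
  have hs1 : s ≤ 1 := by
    rw [hs, div_le_one hd0]; nlinarith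
  -- η = 1 - (1-s)^m
  have hr : (1 - u - ε)*(1 + u + ε) = (1-s)*((1-u)*(1+u)) := by
    have : (1-s)*((1-u)*(1+u)) = (1-u)*(1+u) - s * ((1-u)*(1+u)) := by ring
    rw [this, hsd]; ring
  have hηval : η = 1 - (1-s)^m := by
    rw [hη, hβval, mul_assoc, ← mul_pow, hr, mul_pow (1-s) ((1-u)*(1+u))]
    have hdm : ((1-u)*(1+u))^m ≠ 0 := pow_ne_zero _ hd0.ne'
    rw [mul_comm ((1-s)^m) (((1-u)*(1+u))^m), inv_mul_cancel_left₀ hdm]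
  -- key bound: ε ≤ 2η via Bernoulli
  have hms : (2/3)*ε ≤ (m:ℝ)*s := by
    have hd1 : (1-u)*(1+u) ≤ 1 := by nlinarith
    have h1 : (m:ℝ)*s*((1-u)*(1+u)) = (m:ℝ)*(ε*(2*u+ε)) := by
      rw [mul_assoc, hsd]
    have hm0 : (0:ℝ) ≤ (m:ℝ) := Nat.cast_nonneg m
    nlinarith [mul_pos hs0 hd0, mul_nonneg hm0 hs0.le, mul_nonneg (mul_nonneg hm0 hε0.le) hε0.le]
  have hbern : 1 + (m:ℝ)*s ≤ (1+s)^m := by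
    have := one_add_mul_le_pow (by linarith : (-2:ℝ) ≤ s) m
    linarith [this]
  have h1s : (0:ℝ) ≤ 1 - s := by linarith
  have hpow1 : (1-s)^m * (1+s)^m ≤ 1 := by
    rw [← mul_pow]
    exact pow_le_one₀ (by nlinarith) (by nlinarith)
  have hA : (1-s)^m * (1 + (m:ℝ)*s) ≤ 1 :=
    le_trans (mul_le_mul_of_nonneg_left hbern (pow_nonneg h1s m)) hpow1
  have hfin : (1-s)^m ≤ 1 - ε/2 := by
    have h1 : (0:ℝ) < 1 + (m:ℝ)*s := by nlinarith
    have h2 : (1-s)^m ≤ 1/(1+(m:ℝ)*s) := (le_div_iff₀ h1).mpr hA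
    have h3 : 1/(1+(m:ℝ)*s) ≤ 1 - ε/2 := by
      rw [div_le_iff₀ h1]; nlinarith
    linarith
  have hη2 : ε ≤ 2*η := by rw [hηval]; linarith
  have hη0 : 0 < η := by linarith
  -- finish: X = 2, Y = 1
  subst hδ
  have h2k : 1/(2*(k:ℝ)) = u/2 := by rw [hu]; ring
  refine ⟨2, 1, by norm_num, by norm_num, ?_, ?_, ?_, ?_, ?_, ?_⟩ <;>
    rw [h2k] <;>
    nlinarith [mul_pos hη0 hε0, mul_pos hη0 hu0, mul_le_mul_of_nonneg_right hu3 hη0.le,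
      mul_le_mul_of_nonneg_left hε2.le hη0.le]
end

section
/- For every integer k ≥ 2, let t = (0,1) (so ℓ = 1 and L = 3). There exists a map W : Ptn_k^3 → ℝ_{≥0} which is feasible for the primal linear program — i.e., Σ_{c ∈ PosPtn_k^3} W(c) = 1 and for every i ∈ {−1,0,+1}, t_i^−·(W^+(i)+W^−(i)) ≤ W^+(i)−W^−(i) ≤ t_i^+·(W^+(i)+W^−(i)), where W^±(i) = Σ_c c_i^±·W(c) — such that for all p ∈ [0,1], the objective satisfies Σ_{c ∈ Ptn_k^3} prob^{(p)}(c)·W(c) ≤ α*_k, with equality if and only if p = p*_k. -/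
open scoped BigOperators
open Classical

/-- A clause pattern in `Ptn_k^L` (`L = 2ℓ+1`): a tuple of counts
`(c_i^+, c_i^-)` for each bias class `i ∈ {-ℓ,…,+ℓ}`, all natural numbers,
summing to `k`.  The raw index `r : Fin (2ℓ+1)` encodes the bias class `r - ℓ`
(so raw index `ℓ` is class `0`, `ℓ+i` is class `+i`, and `ℓ-i` is class `-i`). -/
def Ptn (k ℓ : ℕ) :=
  { c : Fin (2*ℓ+1) → Fin (k+1) × Fin (k+1) //
    ∑ i, (((c i).1 : ℕ) + ((c i).2 : ℕ)) = k }

noncomputable instance (k ℓ : ℕ) : Fintype (Ptn k ℓ) := by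
  unfold Ptn; infer_instance

namespace Ptn

/-- `c_i^+` read off at raw class index `r` (zero out of range). -/
def cp {k ℓ : ℕ} (c : Ptn k ℓ) (r : ℕ) : ℕ :=
  if h : r < 2*ℓ+1 then ((c.1 ⟨r, h⟩).1 : ℕ) else 0

/-- `c_i^-` read off at raw class index `r` (zero out of range). -/
def cm {k ℓ : ℕ} (c : Ptn k ℓ) (r : ℕ) : ℕ :=
  if h : r < 2*ℓ+1 then ((c.1 ⟨r, h⟩).2 : ℕ) else 0

/-- Membership in `PosPtn_k^L`: a pattern with no negated literals. -/
def IsPos {k ℓ : ℕ} (c : Ptn k ℓ) : Prop := ∀ i, ((c.1 i).2 : ℕ) = 0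

end Ptn

/-- `prob^p(c)` for a pattern `c ∈ Ptn_k^L`, with the convention `0^0 = 1`:
`2^{-(c₀⁺+c₀⁻)} ∏_{i=1}^ℓ p_i^{c_{+i}⁺+c_{-i}⁻} (1-p_i)^{c_{+i}⁻+c_{-i}⁺}`. -/
noncomputable def patProb {k ℓ : ℕ} (p : ℕ → ℝ) (c : Ptn k ℓ) : ℝ :=
  (1/2 : ℝ) ^ (c.cp ℓ + c.cm ℓ) *
    ∏ i ∈ Finset.Icc 1 ℓ,
      (p i) ^ (c.cp (ℓ + i) + c.cm (ℓ - i)) * (1 - p i) ^ (c.cm (ℓ + i) + c.cp (ℓ - i))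

/-- `t_i^- = inf Int_i`, read off at raw class index `r` (class `i = r - ℓ`). -/
noncomputable def tLo {ℓ : ℕ} (T : BiasPartition ℓ) (r : ℕ) : ℝ :=
  if r = ℓ then -T.t 0 else if ℓ < r then T.t (r - ℓ - 1) else -T.t (ℓ - r)

/-- `t_i^+ = sup Int_i`, read off at raw class index `r` (class `i = r - ℓ`). -/
noncomputable def tHi {ℓ : ℕ} (T : BiasPartition ℓ) (r : ℕ) : ℝ :=
  if r = ℓ then T.t 0 else if ℓ < r then T.t (r - ℓ) else -T.t (ℓ - r - 1)

/-- `W⁺(i) = ∑_c c_i^+ W(c)`, at raw class index `r`. -/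
noncomputable def Wp {k ℓ : ℕ} (W : Ptn k ℓ → ℝ) (r : ℕ) : ℝ :=
  ∑ c : Ptn k ℓ, (c.cp r : ℝ) * W c

/-- `W⁻(i) = ∑_c c_i^- W(c)`, at raw class index `r`. -/
noncomputable def Wm {k ℓ : ℕ} (W : Ptn k ℓ → ℝ) (r : ℕ) : ℝ :=
  ∑ c : Ptn k ℓ, (c.cm r : ℝ) * W c

/-- The bias partition `t = (0, 1)` with `ℓ = 1` (so `L = 3`). -/
noncomputable def T01 : BiasPartition 1 where
  t := fun i => if i = 0 then 0 else 1
  t0_nonneg := by simp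
  mono := by
    intro i hi
    interval_cases i
    norm_num
  t_top := by norm_num


section PrimalTwoAux

private lemma key_strict (a b : ℕ) (ha : 1 ≤ a) (ρ p₀ : ℝ) (hρ : 1 ≤ ρ) (h0 : 0 < p₀) (h1 : p₀ < 1)
    (hstat : (a:ℝ) * ((1 - p₀) * (ρ - p₀)) = (b:ℝ) * (p₀ * (ρ - p₀)) + p₀ * (1 - p₀)) :
    ∀ p ∈ Set.Icc (0:ℝ) 1, p ≠ p₀ →
      p^a * (1-p)^b * (ρ-p) < p₀^a * (1-p₀)^b * (ρ-p₀) := by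
  intro p hp hne
  obtain ⟨hp0, hp1⟩ := hp
  have hs0 : 0 < 1 - p₀ := by linarith
  have hr0 : 0 < ρ - p₀ := by linarith
  have hR : 0 < p₀^a * (1-p₀)^b * (ρ-p₀) := by positivity
  rcases eq_or_lt_of_le hp0 with h0p | h0p
  · rw [← h0p, zero_pow (by omega : a ≠ 0)]
    simpa using hR
  rcases le_or_gt ρ p with hpρ | hpρ
  · have hzz : ρ - p = 0 := by linarith
    rw [hzz, mul_zero]; exact hR
  by_cases hbad : p = 1 ∧ 1 ≤ b
  · obtain ⟨rfl, hb⟩ := hbad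
    rw [show (1:ℝ) - 1 = 0 by ring, zero_pow (by omega : b ≠ 0)]
    simpa using hR
  have hY : 0 < 1 - p ∨ b = 0 := by
    rcases lt_or_eq_of_le hp1 with h | h
    · left; linarith
    · right; by_contra hb; exact hbad ⟨h, by omega⟩
  set x := p / p₀ with hxdef
  set y := (1 - p) / (1 - p₀) with hydef
  set z := (ρ - p) / (ρ - p₀) with hzdef
  have hx : 0 < x := div_pos h0p h0
  have hz : 0 < z := div_pos (by linarith) hr0
  have hxne : x ≠ 1 := by
    intro h
    rw [div_eq_one_iff_eq (ne_of_gt h0)] at h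
    exact hne h
  have hlin : (a:ℝ)*(x-1) + (b:ℝ)*(y-1) + (z-1) = 0 := by
    have e1 : x - 1 = (p - p₀)/p₀ := by rw [hxdef]; field_simp
    have e2 : y - 1 = -(p-p₀)/(1-p₀) := by rw [hydef]; field_simp [hs0.ne']; ring
    have e3 : z - 1 = -(p-p₀)/(ρ-p₀) := by rw [hzdef]; field_simp [hr0.ne']; ring
    rw [e1, e2, e3]
    field_simp
    linear_combination (p - p₀) * hstat
  have hxlog : (a:ℝ) * Real.log x < (a:ℝ) * (x - 1) :=
    mul_lt_mul_of_pos_left (Real.log_lt_sub_one_of_pos hx hxne)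
      (by exact_mod_cast Nat.pos_of_ne_zero (by omega))
  have hylog : (b:ℝ) * Real.log y ≤ (b:ℝ) * (y - 1) := by
    rcases hY with h | h
    · exact mul_le_mul_of_nonneg_left
        (Real.log_le_sub_one_of_pos (div_pos h hs0)) (by positivity)
    · simp [h]
  have hzlog : Real.log z ≤ z - 1 := Real.log_le_sub_one_of_pos hz
  have hsum : (a:ℝ) * Real.log x + (b:ℝ) * Real.log y + Real.log z < 0 := by linarith
  have hey : Real.exp ((b:ℝ) * Real.log y) = y ^ b := by
    rcases hY with h | h
    · rw [Real.exp_nat_mul, Real.exp_log (div_pos h hs0)]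
    · simp [h]
  have hprod : x^a * y^b * z < 1 := by
    have : x^a * y^b * z = Real.exp ((a:ℝ) * Real.log x + (b:ℝ) * Real.log y + Real.log z) := by
      rw [Real.exp_add, Real.exp_add, hey, Real.exp_nat_mul, Real.exp_log hx, Real.exp_log hz]
    rw [this]
    calc Real.exp _ < Real.exp 0 := Real.exp_lt_exp.mpr hsum
      _ = 1 := Real.exp_zero
  have hfact : p^a * (1-p)^b * (ρ-p) = (p₀^a * (1-p₀)^b * (ρ-p₀)) * (x^a * y^b * z) := by
    rw [hxdef, hydef, hzdef, div_pow, div_pow]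
    field_simp
  rw [hfact]
  calc (p₀^a * (1-p₀)^b * (ρ-p₀)) * (x^a * y^b * z)
      < (p₀^a * (1-p₀)^b * (ρ-p₀)) * 1 := by gcongr
    _ = _ := mul_one _

private def mk3 (k a b c d e f : ℕ) (hsum : a + b + (c + d) + (e + f) = k) : Ptn k 1 :=
  ⟨![(⟨a, by omega⟩, ⟨b, by omega⟩), (⟨c, by omega⟩, ⟨d, by omega⟩),
     (⟨e, by omega⟩, ⟨f, by omega⟩)], by
    simp [Fin.sum_univ_three]; omega⟩

section
variable (k a b c d e f : ℕ) (h : a + b + (c + d) + (e + f) = k)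

@[simp] private lemma mk3_cp0 : (mk3 k a b c d e f h).cp 0 = a := by simp [mk3, Ptn.cp]
@[simp] private lemma mk3_cm0 : (mk3 k a b c d e f h).cm 0 = b := by simp [mk3, Ptn.cm]
@[simp] private lemma mk3_cp1 : (mk3 k a b c d e f h).cp 1 = c := by simp [mk3, Ptn.cp]
@[simp] private lemma mk3_cm1 : (mk3 k a b c d e f h).cm 1 = d := by simp [mk3, Ptn.cm]
@[simp] private lemma mk3_cp2 : (mk3 k a b c d e f h).cp 2 = e := by simp [mk3, Ptn.cp]
@[simp] private lemma mk3_cm2 : (mk3 k a b c d e f h).cm 2 = f := by simp [mk3, Ptn.cm]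

private lemma mk3_isPos (hb : b = 0) (hd : d = 0) (hf : f = 0) :
    (mk3 k a b c d e f h).IsPos := by
  intro i; fin_cases i <;> simp [mk3, hb, hd, hf]

private lemma mk3_not_isPos (hb : b ≠ 0) : ¬ (mk3 k a b c d e f h).IsPos := by
  intro hpos; have := hpos 0; simp [mk3] at this; exact hb this

end

private lemma sum3 {α : Type*} [Fintype α] [DecidableEq α] (P₁ P₂ P₃ : α) (w₁ w₂ w₃ : ℝ)
    (g : α → ℝ) :
    ∑ c, g c * ((if c = P₁ then w₁ else 0) + (if c = P₂ then w₂ else 0)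
        + (if c = P₃ then w₃ else 0))
      = g P₁ * w₁ + g P₂ * w₂ + g P₃ * w₃ := by
  simp [mul_add, Finset.sum_add_distrib, mul_ite, mul_zero, Finset.sum_ite_eq']

private lemma sumPos3 {α : Type*} [Fintype α] [DecidableEq α] (Q : α → Prop) [DecidablePred Q]
    (P₁ P₂ P₃ : α) (w₁ w₂ w₃ : ℝ) (h1 : Q P₁) (h2 : ¬ Q P₂) (h3 : ¬ Q P₃) :
    ∑ c ∈ Finset.univ.filter Q, ((if c = P₁ then w₁ else 0) + (if c = P₂ then w₂ else 0)
        + (if c = P₃ then w₃ else 0)) = w₁ := by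
  rw [Finset.sum_add_distrib, Finset.sum_add_distrib,
      Finset.sum_ite_eq' _ P₁, Finset.sum_ite_eq' _ P₂, Finset.sum_ite_eq' _ P₃]
  simp [h1, h2, h3]

@[simp] private lemma tLo_T01_0 : tLo T01 0 = -1 := by norm_num [tLo, T01]
@[simp] private lemma tLo_T01_1 : tLo T01 1 = 0 := by norm_num [tLo, T01]
@[simp] private lemma tLo_T01_2 : tLo T01 2 = 0 := by norm_num [tLo, T01]
@[simp] private lemma tHi_T01_0 : tHi T01 0 = 0 := by norm_num [tHi, T01]
@[simp] private lemma tHi_T01_1 : tHi T01 1 = 0 := by norm_num [tHi, T01]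
@[simp] private lemma tHi_T01_2 : tHi T01 2 = 1 := by norm_num [tHi, T01]

private lemma patProb_eval {k : ℕ} (p : ℝ) (c : Ptn k 1) :
    patProb (fun _ => p) c
      = (1/2:ℝ)^(c.cp 1 + c.cm 1) * (p^(c.cp 2 + c.cm 0) * (1-p)^(c.cm 2 + c.cp 0)) := by
  unfold patProb
  rw [Finset.Icc_self, Finset.prod_singleton]

private lemma primal_core (k : ℕ) (P₁ P₂ P₃ : Ptn k 1) (w₂ w₃ : ℝ) (hw₂ : 0 ≤ w₂)
    (hw₃ : 0 ≤ w₃) (hP₁ : P₁.IsPos) (hP₂ : ¬P₂.IsPos) (hP₃ : ¬P₃.IsPos)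
    (a b : ℕ) (ha : 1 ≤ a) (ρ p₀ C : ℝ) (hC : 0 < C) (hρ : 1 ≤ ρ) (h0 : 0 < p₀) (h1 : p₀ < 1)
    (hstat : (a:ℝ) * ((1 - p₀) * (ρ - p₀)) = (b:ℝ) * (p₀ * (ρ - p₀)) + p₀ * (1 - p₀))
    (hobj : ∀ p : ℝ, patProb (fun _ => p) P₁ * 1 + patProb (fun _ => p) P₂ * w₂
        + patProb (fun _ => p) P₃ * w₃ = C * (p ^ a * (1 - p) ^ b * (ρ - p)))
    (hα : alphaStar k = C * (p₀ ^ a * (1 - p₀) ^ b * (ρ - p₀)))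
    (hps : pStar k = p₀)
    (hfeas : ∀ r, r ≤ 2 →
      tLo T01 r * (((P₁.cp r : ℝ) * 1 + (P₂.cp r : ℝ) * w₂ + (P₃.cp r : ℝ) * w₃)
          + ((P₁.cm r : ℝ) * 1 + (P₂.cm r : ℝ) * w₂ + (P₃.cm r : ℝ) * w₃))
        ≤ ((P₁.cp r : ℝ) * 1 + (P₂.cp r : ℝ) * w₂ + (P₃.cp r : ℝ) * w₃)
          - ((P₁.cm r : ℝ) * 1 + (P₂.cm r : ℝ) * w₂ + (P₃.cm r : ℝ) * w₃) ∧
      ((P₁.cp r : ℝ) * 1 + (P₂.cp r : ℝ) * w₂ + (P₃.cp r : ℝ) * w₃)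
          - ((P₁.cm r : ℝ) * 1 + (P₂.cm r : ℝ) * w₂ + (P₃.cm r : ℝ) * w₃)
        ≤ tHi T01 r * (((P₁.cp r : ℝ) * 1 + (P₂.cp r : ℝ) * w₂ + (P₃.cp r : ℝ) * w₃)
          + ((P₁.cm r : ℝ) * 1 + (P₂.cm r : ℝ) * w₂ + (P₃.cm r : ℝ) * w₃))) :
    ∃ W : Ptn k 1 → ℝ,
      (∀ c, 0 ≤ W c) ∧
      (∑ c ∈ Finset.univ.filter (fun c : Ptn k 1 => c.IsPos), W c) = 1 ∧
      (∀ r, r ≤ 2 →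
        tLo T01 r * (Wp W r + Wm W r) ≤ Wp W r - Wm W r ∧
        Wp W r - Wm W r ≤ tHi T01 r * (Wp W r + Wm W r)) ∧
      ∀ p ∈ Set.Icc (0 : ℝ) 1,
        (∑ c, patProb (fun _ => p) c * W c) ≤ alphaStar k ∧
        ((∑ c, patProb (fun _ => p) c * W c) = alphaStar k ↔ p = pStar k) := by
  refine ⟨fun c => (if c = P₁ then (1:ℝ) else 0) + (if c = P₂ then w₂ else 0)
      + (if c = P₃ then w₃ else 0), ?_, ?_, ?_, ?_⟩
  · intro c; dsimp only; split_ifs <;> linarith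
  · exact sumPos3 _ P₁ P₂ P₃ 1 w₂ w₃ hP₁ hP₂ hP₃
  · intro r hr
    have hWp : Wp (fun c => (if c = P₁ then (1:ℝ) else 0) + (if c = P₂ then w₂ else 0)
        + (if c = P₃ then w₃ else 0)) r
        = (P₁.cp r : ℝ) * 1 + (P₂.cp r : ℝ) * w₂ + (P₃.cp r : ℝ) * w₃ :=
      sum3 P₁ P₂ P₃ 1 w₂ w₃ (fun c => (c.cp r : ℝ))
    have hWm : Wm (fun c => (if c = P₁ then (1:ℝ) else 0) + (if c = P₂ then w₂ else 0)
        + (if c = P₃ then w₃ else 0)) r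
        = (P₁.cm r : ℝ) * 1 + (P₂.cm r : ℝ) * w₂ + (P₃.cm r : ℝ) * w₃ :=
      sum3 P₁ P₂ P₃ 1 w₂ w₃ (fun c => (c.cm r : ℝ))
    rw [hWp, hWm]
    exact hfeas r hr
  · intro p hp
    have hsum : (∑ c, patProb (fun _ => p) c * ((if c = P₁ then (1:ℝ) else 0)
        + (if c = P₂ then w₂ else 0) + (if c = P₃ then w₃ else 0)))
        = C * (p ^ a * (1 - p) ^ b * (ρ - p)) := by
      rw [sum3 P₁ P₂ P₃ 1 w₂ w₃ (patProb (fun _ => p))]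
      exact hobj p
    have hG := key_strict a b ha ρ p₀ hρ h0 h1 hstat p hp
    constructor
    · rw [hsum, hα]
      rcases eq_or_ne p p₀ with rfl | hne
      · exact le_rfl
      · exact mul_le_mul_of_nonneg_left (hG hne).le hC.le
    · rw [hsum, hα, hps]
      constructor
      · intro h
        by_contra hne
        have := mul_lt_mul_of_pos_left (hG hne) hC
        linarith
      · rintro rfl; rfl

end PrimalTwoAux

set_option maxHeartbeats 1000000 in
/-- **A uniformly hard primal solution for superoblivious algorithms**
(Lemma `primal-two`): for every `k ≥ 2` there is a feasible solution `W` of the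
primal LP for the bias partition `t = (0,1)` (so `ℓ = 1`, `L = 3`) whose
objective value `∑_c prob^{(p)}(c)·W(c)` is at most `α*_k` for every
`p ∈ [0,1]`, with equality if and only if `p = p*_k`. -/
theorem primal_two (k : ℕ) (hk : 2 ≤ k) :
    ∃ W : Ptn k 1 → ℝ,
      (∀ c, 0 ≤ W c) ∧
      (∑ c ∈ Finset.univ.filter (fun c : Ptn k 1 => c.IsPos), W c) = 1 ∧
      (∀ r, r ≤ 2 →
        tLo T01 r * (Wp W r + Wm W r) ≤ Wp W r - Wm W r ∧
        Wp W r - Wm W r ≤ tHi T01 r * (Wp W r + Wm W r)) ∧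
      ∀ p ∈ Set.Icc (0 : ℝ) 1,
        (∑ c, patProb (fun _ => p) c * W c) ≤ alphaStar k ∧
        ((∑ c, patProb (fun _ => p) c * W c) = alphaStar k ↔ p = pStar k) := by
  obtain ⟨m, hm⟩ : ∃ m, k = 2*m ∨ k = 2*m+1 := ⟨k/2, by omega⟩
  have hm1 : 1 ≤ m := by omega
  set M : ℝ := (m : ℝ) with hM
  have hM1 : (1:ℝ) ≤ M := by rw [hM]; exact_mod_cast hm1
  have hMpos : (0:ℝ) < M := by linarith
  have h2M : (0:ℝ) < 2*M+1 := by linarith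
  have hM1p : (0:ℝ) < M+1 := by linarith
  have hp₀0 : (0:ℝ) < (M+1)/(2*M+1) := by positivity
  have hp₀1 : (M+1)/(2*M+1) < 1 := by rw [div_lt_one h2M]; linarith
  have hbcast : ((m - 1 : ℕ) : ℝ) = M - 1 := by
    rw [Nat.cast_sub hm1, hM]; norm_num
  have hpow : ∀ x : ℝ, x ^ m = x ^ (m-1) * x := by
    intro x
    conv_lhs => rw [show m = (m-1)+1 by omega]
    rw [pow_succ]
  rcases hm with hkm | hkm
  · -- even case : k = 2m
    have hodd : ¬ Odd k := by simp [Nat.odd_iff]; omega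
    refine primal_core k
      (mk3 k m 0 0 0 m 0 (by omega)) (mk3 k 0 m 0 0 0 m (by omega))
      (mk3 k 0 (m+1) 0 0 0 (m-1) (by omega))
      (1/(2*M+1)) (2*M^2/((M+1)*(2*M+1))) (by positivity) (by positivity)
      (mk3_isPos _ _ _ _ _ _ _ _ rfl rfl rfl)
      (mk3_not_isPos _ _ _ _ _ _ _ _ (by omega))
      (mk3_not_isPos _ _ _ _ _ _ _ _ (by omega))
      m (m-1) hm1 ((M+1)^2/(2*M+1)) ((M+1)/(2*M+1)) (2/(M+1)) (by positivity)
      ?_ hp₀0 hp₀1 ?_ ?_ ?_ ?_ ?_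
    · rw [le_div_iff₀ h2M]; nlinarith
    · rw [hbcast, hM]; field_simp; ring
    · intro p
      rw [patProb_eval, patProb_eval, patProb_eval]
      simp only [mk3_cp0, mk3_cm0, mk3_cp1, mk3_cm1, mk3_cp2, mk3_cm2,
        Nat.add_zero, Nat.zero_add, pow_zero, one_mul]
      have hbr : (1 + 1/(2*M+1)) * (1-p) + (2*M^2/((M+1)*(2*M+1))) * p
          = (2/(M+1)) * ((M+1)^2/(2*M+1) - p) := by field_simp; ring
      rw [hpow (1-p), pow_succ p m]
      linear_combination (p^m * (1-p)^(m-1)) * hbr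
    · have hk2 : k/2 = m := by omega
      rw [alphaStar, pStar, gammaStar, if_neg hodd, hk2]
      have hcast : ((k:ℝ)) = 2*M := by rw [hkm, hM]; push_cast; ring
      rw [hcast]
      have hps' : (1 + 1/(2*M+1))/2 = (M+1)/(2*M+1) := by field_simp; ring
      rw [hps']
      have h2s : (2/(M+1)) * ((M+1)^2/(2*M+1) - (M+1)/(2*M+1))
          = 2 * (1 - (M+1)/(2*M+1)) := by field_simp; ring
      rw [mul_pow, hpow (1 - (M+1)/(2*M+1))]
      linear_combination (-(((M+1)/(2*M+1))^m * (1 - (M+1)/(2*M+1))^(m-1))) * h2s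
    · rw [pStar, gammaStar, if_neg hodd]
      have hcast : ((k:ℝ)) = 2*M := by rw [hkm, hM]; push_cast; ring
      rw [hcast]
      field_simp
      ring
    · intro r hr
      have hw2' : (0:ℝ) ≤ 1/(2*M+1) := by positivity
      have hw3' : (0:ℝ) ≤ 2*M^2/((M+1)*(2*M+1)) := by positivity
      interval_cases r
      · simp only [mk3_cp0, mk3_cm0, tLo_T01_0, tHi_T01_0,
          Nat.cast_zero, Nat.cast_add, Nat.cast_one, hbcast]
        have he : M * (1/(2*M+1)) + (M+1) * (2*M^2/((M+1)*(2*M+1))) = M := by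
          field_simp; ring
        constructor
        · linarith [hM1]
        · linarith [he]
      · simp only [mk3_cp1, mk3_cm1, Nat.cast_zero, tLo_T01_1, tHi_T01_1]
        norm_num
      · simp only [mk3_cp2, mk3_cm2, tLo_T01_2, tHi_T01_2,
          Nat.cast_zero, Nat.cast_add, Nat.cast_one, hbcast]
        have he : M - (M * (1/(2*M+1)) + (M-1) * (2*M^2/((M+1)*(2*M+1))))
            = 4*M^2/((M+1)*(2*M+1)) := by field_simp; ring
        have hpos4 : (0:ℝ) ≤ 4*M^2/((M+1)*(2*M+1)) := by positivity
        have hms : (0:ℝ) ≤ M - 1 := by linarith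
        have h2' : (0:ℝ) ≤ (M-1) * (2*M^2/((M+1)*(2*M+1))) := by positivity
        have h1' : (0:ℝ) ≤ M * (1/(2*M+1)) := by positivity
        constructor
        · linarith [he, hpos4]
        · linarith [h1', h2']
  · -- odd case : k = 2m+1
    have hodd : Odd k := by simp [Nat.odd_iff]; omega
    refine primal_core k
      (mk3 k m 0 0 0 (m+1) 0 (by omega)) (mk3 k 0 (m+1) 0 0 0 m (by omega))
      (mk3 k m (m+1) 0 0 0 0 (by omega))
      1 (2*M/(M+1)) (by norm_num) (by positivity)
      (mk3_isPos _ _ _ _ _ _ _ _ rfl rfl rfl)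
      (mk3_not_isPos _ _ _ _ _ _ _ _ (by omega))
      (mk3_not_isPos _ _ _ _ _ _ _ _ (by omega))
      (m+1) (m-1) (by omega) 1 ((M+1)/(2*M+1)) ((4*M+2)/(M+1)) (by positivity)
      le_rfl hp₀0 hp₀1 ?_ ?_ ?_ ?_ ?_
    · rw [hbcast, hM]; field_simp; push_cast; ring
    · intro p
      rw [patProb_eval, patProb_eval, patProb_eval]
      simp only [mk3_cp0, mk3_cm0, mk3_cp1, mk3_cm1, mk3_cp2, mk3_cm2,
        Nat.add_zero, Nat.zero_add, pow_zero, one_mul]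
      have h2c : 1*1 + 1*1 + 2*M/(M+1) = (4*M+2)/(M+1) := by field_simp; ring
      rw [hpow (1-p)]
      linear_combination (p^(m+1) * (1-p)^(m-1) * (1-p)) * h2c
    · have hk2 : k/2 = m := by omega
      rw [alphaStar, pStar, gammaStar, if_pos hodd, hk2]
      have hcast : ((k:ℝ)) = 2*M+1 := by rw [hkm, hM]; push_cast; ring
      rw [hcast]
      have hps' : (1 + 1/(2*M+1))/2 = (M+1)/(2*M+1) := by field_simp; ring
      rw [hps']
      have h2s : ((4*M+2)/(M+1)) * ((M+1)/(2*M+1)) = 2 := by field_simp; ring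
      rw [mul_pow, hpow (1 - (M+1)/(2*M+1)), pow_succ ((M+1)/(2*M+1)) m]
      linear_combination (-(((M+1)/(2*M+1))^m * (1 - (M+1)/(2*M+1))^(m-1)
          * (1 - (M+1)/(2*M+1)))) * h2s
    · rw [pStar, gammaStar, if_pos hodd]
      have hcast : ((k:ℝ)) = 2*M+1 := by rw [hkm, hM]; push_cast; ring
      rw [hcast]
      field_simp
      ring
    · intro r hr
      have hw3' : (0:ℝ) ≤ 2*M/(M+1) := by positivity
      interval_cases r
      · simp only [mk3_cp0, mk3_cm0, tLo_T01_0, tHi_T01_0,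
          Nat.cast_zero, Nat.cast_add, Nat.cast_one]
        have he : (M+1) * 1 + (M+1) * (2*M/(M+1)) - (M * 1 + M * (2*M/(M+1)))
            = 1 + 2*M/(M+1) := by field_simp; ring
        have h0' : (0:ℝ) ≤ M * (2*M/(M+1)) := by positivity
        constructor
        · linarith [h0', hMpos]
        · linarith [he, hw3']
      · simp only [mk3_cp1, mk3_cm1, Nat.cast_zero, tLo_T01_1, tHi_T01_1]
        norm_num
      · simp only [mk3_cp2, mk3_cm2, tLo_T01_2, tHi_T01_2,
          Nat.cast_zero, Nat.cast_add, Nat.cast_one]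
        constructor
        · linarith [hM1]
        · linarith [hMpos]
end
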